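/- arXiv:1410.8807 — 4 statements merged into one kernel-verified Lean document; each statement's English description precedes it below -/
import Mathlib

section
/- Let u and v be two vertices of a graph G at distance at least 4, and let G' be obtained from G by deleting u and v and adding a new vertex w adjacent to all of N(u) ∪ N(v) (vertex sticking). Then the triangle graphs T(G) and T(G') are isomorphic. -/
open SimpleGraph

/-- A triangle in a graph: a 3-element vertex set, pairwise adjacent. -/
def IsTriangle {V : Type*} (G : SimpleGraph V) (t : Finset V) : Prop :=
  t.card = 3 ∧ ∀ u ∈ t, ∀ v ∈ t, u ≠ v → G.Adj u v

/-- The triangle graph: vertices are the triangles of `G`, two triangles are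
adjacent iff they share an edge (equivalently, share exactly two vertices). -/
def triangleGraph {V : Type*} [DecidableEq V] (G : SimpleGraph V) :
    SimpleGraph {t : Finset V // IsTriangle G t} where
  Adj s t := s ≠ t ∧ ((s : Finset V) ∩ (t : Finset V)).card = 2
  symm := ⟨by
    intro s t h
    exact ⟨h.1.symm, by rw [Finset.inter_comm]; exact h.2⟩⟩
  loopless := ⟨fun s h => h.1 rfl⟩

/-- `K₅` minus the edges of a triangle (on vertices 0,1,2). -/
def K5mK3 : SimpleGraph (Fin 5) where
  Adj u v := u ≠ v ∧ ¬(u.val < 3 ∧ v.val < 3)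
  symm := ⟨by
    intro u v h
    exact ⟨h.1.symm, fun hc => h.2 ⟨hc.2, hc.1⟩⟩⟩
  loopless := ⟨fun u h => h.1 rfl⟩

/-- The wheel `Wₙ = K₁ ∨ Cₙ`; the hub is `none`. -/
def wheel (n : ℕ) : SimpleGraph (Option (Fin n)) :=
  SimpleGraph.fromRel (fun u v =>
    u = none ∨ ∃ a b, u = some a ∧ v = some b ∧ (cycleGraph n).Adj a b)

/-- The square of a graph: join vertices at distance at most 2. -/
def squareGraph {V : Type*} (G : SimpleGraph V) : SimpleGraph V where
  Adj u v := u ≠ v ∧ (G.Adj u v ∨ ∃ w, G.Adj u w ∧ G.Adj w v)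
  symm := ⟨by
    intro u v h
    refine ⟨h.1.symm, ?_⟩
    rcases h.2 with h' | ⟨w, h1, h2⟩
    · exact Or.inl h'.symm
    · exact Or.inr ⟨w, h2.symm, h1.symm⟩⟩
  loopless := ⟨fun u h => h.1 rfl⟩

/-- The number of triangles of `G` containing both `u` and `v`. -/
noncomputable def triCount {V : Type*} (G : SimpleGraph V) (u v : V) : ℕ :=
  {t : Finset V | IsTriangle G t ∧ u ∈ t ∧ v ∈ t}.ncard

/-- `G` contains a (not necessarily induced) subgraph isomorphic to `H`. -/
def HasSubgraphIso {α V : Type*} (H : SimpleGraph α) (G : SimpleGraph V) : Prop :=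
  ∃ f : H →g G, Function.Injective f

/-- The graph obtained from `G` by sticking the vertices `u` and `v`: the vertex `u`
plays the role of the new vertex `w`, adjacent to all of `N(u) ∪ N(v)`, while `v`
becomes isolated. -/
def stickGraph {V : Type*} [DecidableEq V] (G : SimpleGraph V) (u v : V) : SimpleGraph V :=
  SimpleGraph.fromRel (fun a b =>
    a ≠ v ∧ b ≠ v ∧
      ((a = u ∧ (G.Adj u b ∨ G.Adj v b)) ∨ (a ≠ u ∧ b ≠ u ∧ G.Adj a b)))

section Helpers
variable {V : Type*} [DecidableEq V] {G : SimpleGraph V} {u v : V}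

lemma stick_adj_iff {a b : V} :
    (stickGraph G u v).Adj a b ↔ a ≠ b ∧ a ≠ v ∧ b ≠ v ∧
      ((a = u ∧ (G.Adj u b ∨ G.Adj v b)) ∨ (b = u ∧ (G.Adj u a ∨ G.Adj v a)) ∨
       (a ≠ u ∧ b ≠ u ∧ G.Adj a b)) := by
  simp only [stickGraph, SimpleGraph.fromRel_adj]
  constructor
  · rintro ⟨hab, ⟨hav, hbv, h⟩ | ⟨hbv, hav, h⟩⟩
    · refine ⟨hab, hav, hbv, ?_⟩
      rcases h with ⟨hau, h⟩ | ⟨hau, hbu, h⟩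
      · exact Or.inl ⟨hau, h⟩
      · exact Or.inr (Or.inr ⟨hau, hbu, h⟩)
    · refine ⟨hab, hav, hbv, ?_⟩
      rcases h with ⟨hbu, h⟩ | ⟨hbu, hau, h⟩
      · exact Or.inr (Or.inl ⟨hbu, h⟩)
      · exact Or.inr (Or.inr ⟨hau, hbu, h.symm⟩)
  · rintro ⟨hab, hav, hbv, h⟩
    refine ⟨hab, ?_⟩
    rcases h with ⟨hau, h⟩ | ⟨hbu, h⟩ | ⟨hau, hbu, h⟩
    · exact Or.inl ⟨hav, hbv, Or.inl ⟨hau, h⟩⟩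
    · exact Or.inr ⟨hbv, hav, Or.inl ⟨hbu, h⟩⟩
    · exact Or.inl ⟨hav, hbv, Or.inr ⟨hau, hbu, h⟩⟩

lemma isTriangle_of (G : SimpleGraph V) {a b c : V} (hab : a ≠ b) (hac : a ≠ c) (hbc : b ≠ c)
    (h1 : G.Adj a b) (h2 : G.Adj a c) (h3 : G.Adj b c) : IsTriangle G {a, b, c} := by
  constructor
  · rw [Finset.card_insert_of_notMem (by simp [hab, hac]),
      Finset.card_insert_of_notMem (by simp [hbc]), Finset.card_singleton]
  · intro x hx y hy hxy
    simp only [Finset.mem_insert, Finset.mem_singleton] at hx hy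
    rcases hx with rfl | rfl | rfl <;> rcases hy with rfl | rfl | rfl <;>
      first
        | exact (hxy rfl).elim
        | exact h1 | exact h2 | exact h3
        | exact h1.symm | exact h2.symm | exact h3.symm

end Helpers

def fset {V : Type*} [DecidableEq V] (u v : V) (t : Finset V) : Finset V :=
  if v ∈ t then insert u (t.erase v) else t

open Classical in
noncomputable def gset {V : Type*} [DecidableEq V] (G : SimpleGraph V) (u v : V)
    (t : Finset V) : Finset V :=
  if u ∈ t ∧ ∃ a ∈ t, a ≠ u ∧ G.Adj v a then insert v (t.erase u) else t

section Key
variable {V : Type*} [DecidableEq V] {G : SimpleGraph V} {u v : V}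
variable (hnuv : u ≠ v) (hadj : ¬ G.Adj u v)
variable (hcn : ∀ a, G.Adj u a → G.Adj v a → False)
variable (h3 : ∀ a b, G.Adj u a → G.Adj a b → G.Adj v b → False)
include hnuv hadj hcn h3
set_option linter.unusedSectionVars false

/-- u is not in a G-triangle containing v. -/
lemma u_not_mem {t : Finset V} (ht : IsTriangle G t) (hv : v ∈ t) : u ∉ t := by
  intro hu
  exact hadj (ht.2 u hu v hv hnuv)

/-- v is not in any triangle of the stick graph. -/
lemma v_not_mem_stick {t : Finset V} (ht : IsTriangle (stickGraph G u v) t) : v ∉ t := by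
  intro hv
  have h2 : 0 < (t.erase v).card := by
    rw [Finset.card_erase_of_mem hv, ht.1]; norm_num
  obtain ⟨x, hx⟩ := Finset.card_pos.mp h2
  have hxt := Finset.mem_of_mem_erase hx
  have hxv : x ≠ v := Finset.ne_of_mem_erase hx
  have := (stick_adj_iff.mp (ht.2 v hv x hxt hxv.symm)).2.1
  exact this rfl

/-- forward image is a triangle, case v ∈ t -/
lemma fwd_tri {t : Finset V} (ht : IsTriangle G t) :
    IsTriangle (stickGraph G u v) (fset u v t) := by
  rw [fset]
  split_ifs with hv
  · have hu : u ∉ t := u_not_mem hnuv hadj hcn h3 ht hv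
    have huE : u ∉ t.erase v := fun h => hu (Finset.mem_of_mem_erase h)
    constructor
    · rw [Finset.card_insert_of_notMem huE, Finset.card_erase_of_mem hv, ht.1]
    · intro x hx y hy hxy
      rw [Finset.mem_insert] at hx hy
      rcases hx with rfl | hx <;> rcases hy with rfl | hy
      · exact (hxy rfl).elim
      · have hyt := Finset.mem_of_mem_erase hy
        have hyv : y ≠ v := Finset.ne_of_mem_erase hy
        exact stick_adj_iff.mpr ⟨hxy, hnuv, hyv,
          Or.inl ⟨rfl, Or.inr (ht.2 v hv y hyt hyv.symm)⟩⟩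
      · have hxt := Finset.mem_of_mem_erase hx
        have hxv : x ≠ v := Finset.ne_of_mem_erase hx
        exact stick_adj_iff.mpr ⟨hxy, hxv, hnuv,
          Or.inr (Or.inl ⟨rfl, Or.inr (ht.2 v hv x hxt hxv.symm)⟩)⟩
      · have hxt := Finset.mem_of_mem_erase hx
        have hyt := Finset.mem_of_mem_erase hy
        exact stick_adj_iff.mpr ⟨hxy, Finset.ne_of_mem_erase hx, Finset.ne_of_mem_erase hy,
          Or.inr (Or.inr ⟨fun h => hu (h ▸ hxt), fun h => hu (h ▸ hyt), ht.2 x hxt y hyt hxy⟩)⟩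
  · refine ⟨ht.1, ?_⟩
    intro x hx y hy hxy
    have hxv : x ≠ v := fun h => hv (h ▸ hx)
    have hyv : y ≠ v := fun h => hv (h ▸ hy)
    by_cases hxu : x = u
    · subst hxu
      exact stick_adj_iff.mpr ⟨hxy, hxv, hyv, Or.inl ⟨rfl, Or.inl (ht.2 x hx y hy hxy)⟩⟩
    · by_cases hyu : y = u
      · subst hyu
        exact stick_adj_iff.mpr ⟨hxy, hxv, hyv,
          Or.inr (Or.inl ⟨rfl, Or.inl ((ht.2 x hx y hy hxy).symm)⟩)⟩
      · exact stick_adj_iff.mpr ⟨hxy, hxv, hyv, Or.inr (Or.inr ⟨hxu, hyu, ht.2 x hx y hy hxy⟩)⟩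


lemma bwd_tri {t : Finset V} (ht : IsTriangle (stickGraph G u v) t) :
    IsTriangle G (gset G u v t) := by
  have hvt : v ∉ t := v_not_mem_stick hnuv hadj hcn h3 ht
  have hGadj : ∀ p q, p ∈ t → q ∈ t → p ≠ u → q ≠ u → p ≠ q → G.Adj p q := by
    intro p q hp hq hpu hqu hpq
    rcases (stick_adj_iff.mp (ht.2 p hp q hq hpq)).2.2.2 with ⟨h, _⟩ | ⟨h, _⟩ | ⟨_, _, h⟩
    · exact absurd h hpu
    · exact absurd h hqu
    · exact h
  rw [gset]
  split_ifs with hc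
  · obtain ⟨hu, a, hat, hau, hva⟩ := hc
    have hside : ∀ p, p ∈ t → p ≠ u → G.Adj u p ∨ G.Adj v p := by
      intro p hp hpu
      rcases (stick_adj_iff.mp (ht.2 u hu p hp (Ne.symm hpu))).2.2.2 with ⟨_, h⟩ | ⟨h, _⟩ | ⟨h, _, _⟩
      · exact h
      · exact absurd h hpu
      · exact absurd rfl h
    have hvall : ∀ p, p ∈ t → p ≠ u → G.Adj v p := by
      intro p hp hpu
      rcases hside p hp hpu with h | h
      · by_cases hpa : p = a
        · subst hpa; exact (hcn p h hva).elim
        · exact (h3 p a h (hGadj p a hp hat hpu hau hpa) hva).elim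
      · exact h
    obtain ⟨x, y, hxy, hs⟩ : ∃ x y, x ≠ y ∧ t.erase u = {x, y} :=
      Finset.card_eq_two.mp (by rw [Finset.card_erase_of_mem hu, ht.1])
    have hxE : x ∈ t.erase u := by rw [hs]; exact Finset.mem_insert_self _ _
    have hyE : y ∈ t.erase u := by rw [hs]; simp
    have hxt := Finset.mem_of_mem_erase hxE
    have hyt := Finset.mem_of_mem_erase hyE
    have hxu : x ≠ u := Finset.ne_of_mem_erase hxE
    have hyu : y ≠ u := Finset.ne_of_mem_erase hyE
    rw [hs]
    exact isTriangle_of G (fun h => hvt (h ▸ hxt)) (fun h => hvt (h ▸ hyt)) hxy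
      (hvall x hxt hxu) (hvall y hyt hyu) (hGadj x y hxt hyt hxu hyu hxy)
  · push_neg at hc
    refine ⟨ht.1, ?_⟩
    intro x hx y hy hxy
    rcases (stick_adj_iff.mp (ht.2 x hx y hy hxy)).2.2.2 with ⟨hxu, h⟩ | ⟨hyu, h⟩ | ⟨_, _, h⟩
    · have hyu : y ≠ u := fun h' => hxy (hxu.trans h'.symm)
      rcases h with h | h
      · exact hxu ▸ h
      · exact absurd h (hc (hxu ▸ hx) y hy hyu)
    · have hxu : x ≠ u := fun h' => hxy (h'.trans hyu.symm)
      rcases h with h | h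
      · exact hyu ▸ h.symm
      · exact absurd h (hc (hyu ▸ hy) x hx hxu)
    · exact h

lemma left_inv_set {t : Finset V} (ht : IsTriangle G t) : gset G u v (fset u v t) = t := by
  rw [fset]
  split_ifs with hv
  · have hu : u ∉ t := u_not_mem hnuv hadj hcn h3 ht hv
    have huE : u ∉ t.erase v := fun h => hu (Finset.mem_of_mem_erase h)
    have h2 : 0 < (t.erase v).card := by
      rw [Finset.card_erase_of_mem hv, ht.1]; norm_num
    obtain ⟨a, ha⟩ := Finset.card_pos.mp h2
    have hat := Finset.mem_of_mem_erase ha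
    have hav : a ≠ v := Finset.ne_of_mem_erase ha
    rw [gset, if_pos]
    · rw [Finset.erase_insert huE, Finset.insert_erase hv]
    · refine ⟨Finset.mem_insert_self _ _, a, Finset.mem_insert_of_mem ha,
        fun h => hu (h ▸ hat), ht.2 v hv a hat hav.symm⟩
  · rw [gset, if_neg]
    rintro ⟨hu, a, hat, hau, hva⟩
    exact hcn a (ht.2 u hu a hat (Ne.symm hau)) hva

lemma right_inv_set {t : Finset V} (ht : IsTriangle (stickGraph G u v) t) :
    fset u v (gset G u v t) = t := by
  have hvt : v ∉ t := v_not_mem_stick hnuv hadj hcn h3 ht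
  rw [gset]
  split_ifs with hc
  · obtain ⟨hu, -⟩ := hc
    have hvE : v ∉ t.erase u := fun h => hvt (Finset.mem_of_mem_erase h)
    rw [fset, if_pos (Finset.mem_insert_self _ _), Finset.erase_insert hvE,
      Finset.insert_erase hu]
  · rw [fset, if_neg hvt]


lemma mixed_card {s t : Finset V} (hs : IsTriangle G s) (ht : IsTriangle G t)
    (hvs : v ∈ s) (hvt : v ∉ t) :
    ((fset u v s ∩ fset u v t).card = 2 ↔ (s ∩ t).card = 2) := by
  have hus : u ∉ s := u_not_mem hnuv hadj hcn h3 hs hvs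
  rw [fset, fset, if_pos hvs, if_neg hvt]
  by_cases hut : u ∈ t
  · have hempty : s ∩ t = ∅ := by
      rw [Finset.eq_empty_iff_forall_notMem]
      intro x hx
      rw [Finset.mem_inter] at hx
      have hxu : x ≠ u := fun h => hus (h ▸ hx.1)
      have hxv : x ≠ v := fun h => hvt (h ▸ hx.2)
      exact hcn x (ht.2 u hut x hx.2 (Ne.symm hxu)) (hs.2 v hvs x hx.1 (Ne.symm hxv))
    have hsub : insert u (s.erase v) ∩ t ⊆ {u} := by
      intro x hx
      rw [Finset.mem_inter, Finset.mem_insert] at hx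
      rcases hx.1 with rfl | hxE
      · exact Finset.mem_singleton_self _
      · exact absurd (Finset.mem_inter.mpr ⟨Finset.mem_of_mem_erase hxE, hx.2⟩)
          (by rw [hempty]; exact Finset.notMem_empty x)
    have h1 := Finset.card_le_card hsub
    rw [Finset.card_singleton] at h1
    rw [hempty]
    simp
    omega
  · have hid : insert u (s.erase v) ∩ t = s ∩ t := by
      ext x
      simp only [Finset.mem_inter, Finset.mem_insert, Finset.mem_erase]
      constructor
      · rintro ⟨rfl | ⟨hxv, hxs⟩, hxt⟩
        · exact absurd hxt hut
        · exact ⟨hxs, hxt⟩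
      · rintro ⟨hxs, hxt⟩
        exact ⟨Or.inr ⟨fun h => hvt (h ▸ hxt), hxs⟩, hxt⟩
    rw [hid]

lemma inter_card {s t : Finset V} (hs : IsTriangle G s) (ht : IsTriangle G t) :
    ((fset u v s ∩ fset u v t).card = 2 ↔ (s ∩ t).card = 2) := by
  by_cases hvs : v ∈ s <;> by_cases hvt : v ∈ t
  · have hus : u ∉ s := u_not_mem hnuv hadj hcn h3 hs hvs
    have hut : u ∉ t := u_not_mem hnuv hadj hcn h3 ht hvt
    have hid : insert u (s.erase v) ∩ insert u (t.erase v) = insert u ((s ∩ t).erase v) := by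
      ext x
      simp only [Finset.mem_inter, Finset.mem_insert, Finset.mem_erase]
      tauto
    have huI : u ∉ (s ∩ t).erase v :=
      fun h => hus (Finset.mem_inter.mp (Finset.mem_of_mem_erase h)).1
    have hvI : v ∈ s ∩ t := Finset.mem_inter.mpr ⟨hvs, hvt⟩
    have hpos : 0 < (s ∩ t).card := Finset.card_pos.mpr ⟨v, hvI⟩
    rw [fset, fset, if_pos hvs, if_pos hvt, hid, Finset.card_insert_of_notMem huI,
      Finset.card_erase_of_mem hvI]
    omega
  · exact mixed_card hnuv hadj hcn h3 hs ht hvs hvt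
  · rw [Finset.inter_comm (fset u v s), Finset.inter_comm s]
    exact mixed_card hnuv hadj hcn h3 ht hs hvt hvs
  · rw [fset, fset, if_neg hvs, if_neg hvt]

lemma key_iso : Nonempty (triangleGraph G ≃g triangleGraph (stickGraph G u v)) := by
  have hinj : ∀ {s t : Finset V}, IsTriangle G s → IsTriangle G t →
      fset u v s = fset u v t → s = t := by
    intro s t hs ht h
    rw [← left_inv_set hnuv hadj hcn h3 hs, h, left_inv_set hnuv hadj hcn h3 ht]
  refine ⟨⟨⟨fun t => ⟨fset u v t.1, fwd_tri hnuv hadj hcn h3 t.2⟩,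
    fun t => ⟨gset G u v t.1, bwd_tri hnuv hadj hcn h3 t.2⟩,
    fun t => Subtype.ext (left_inv_set hnuv hadj hcn h3 t.2),
    fun t => Subtype.ext (right_inv_set hnuv hadj hcn h3 t.2)⟩, ?_⟩⟩
  intro s t
  simp only [Equiv.coe_fn_mk]
  simp only [triangleGraph]
  constructor
  · rintro ⟨hne, hcard⟩
    refine ⟨fun h => hne (by rw [h]), (inter_card hnuv hadj hcn h3 s.2 t.2).mp hcard⟩
  · rintro ⟨hne, hcard⟩
    refine ⟨fun h => hne (Subtype.ext (hinj s.2 t.2 ?_)),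
      (inter_card hnuv hadj hcn h3 s.2 t.2).mpr hcard⟩
    exact congrArg Subtype.val h

end Key

/-- Vertex sticking: if `u` and `v` are at distance at least 4 (every walk from `u`
to `v` has length at least 4), then the triangle graphs of `G` and of the stuck
graph are isomorphic. -/
theorem triangleGraph_iso_of_vertexSticking {V : Type*} [Fintype V] [DecidableEq V]
    (G : SimpleGraph V) (u v : V)
    (hdist : ∀ p : G.Walk u v, 4 ≤ p.length) :
    Nonempty (triangleGraph G ≃g triangleGraph (stickGraph G u v)) := by
  have hnuv : u ≠ v := by
    intro h
    subst h
    simpa using hdist Walk.nil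
  have hadj : ¬ G.Adj u v := fun h => by
    simpa using hdist (Walk.cons h Walk.nil)
  have hcn : ∀ a, G.Adj u a → G.Adj v a → False := fun a h1 h2 => by
    simpa using hdist (Walk.cons h1 (Walk.cons h2.symm Walk.nil))
  have h3 : ∀ a b, G.Adj u a → G.Adj a b → G.Adj v b → False := fun a b h1 h2 hb => by
    simpa using hdist (Walk.cons h1 (Walk.cons h2 (Walk.cons hb.symm Walk.nil)))
  exact key_iso hnuv hadj hcn h3
end

section
/- Let n ≥ 3 and let G be a graph, not isomorphic to K_5 minus a triangle, that is minimal (under taking subgraphs) with the property that T(G) contains an induced cycle of length n. Then, fixing such an induced n-cycle, no edge of G is contained in more than two of the n cycle-triangles, G has exactly 2n edges, of which exactly n lie in exactly one cycle-triangle and exactly n lie in exactly two cycle-triangles. -/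
open SimpleGraph

/-- `G` is a minimal forbidden graph for `Cₙ`: its triangle graph contains an
induced `n`-cycle, but the triangle graph of no proper subgraph of `G` does. -/
def MinimalForbiddenFor {V : Type*} [DecidableEq V] (G : SimpleGraph V) (n : ℕ) : Prop :=
  Nonempty (cycleGraph n ↪g triangleGraph G) ∧
    ∀ H : G.Subgraph, H ≠ ⊤ → IsEmpty (cycleGraph n ↪g triangleGraph H.coe)

lemma sym2_exists_eq {α : Type*} (e : Sym2 α) : ∃ x y, e = s(x, y) :=
  Sym2.ind (fun x y => ⟨x, y, rfl⟩) e

lemma aux_tri_inter_card_le {V : Type*} [DecidableEq V] {G : SimpleGraph V} {s t : Finset V}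
    (hs : IsTriangle G s) (ht : IsTriangle G t) (hst : s ≠ t) : (s ∩ t).card ≤ 2 := by
  by_contra h
  push_neg at h
  have h1 : s ∩ t = s := Finset.eq_of_subset_of_card_le Finset.inter_subset_left
    (by rw [hs.1]; omega)
  have h2 : s ⊆ t := by rw [← h1]; exact Finset.inter_subset_right
  exact hst (Finset.eq_of_subset_of_card_le h2 (by rw [hs.1, ht.1]))

lemma aux_cycle_adj_val {m : ℕ} {i j : Fin (m+2)} (h : (cycleGraph (m+2)).Adj i j) :
    (j:ℕ) = (i:ℕ)+1 ∨ ((j:ℕ) = 0 ∧ (i:ℕ) = m+1) ∨ (i:ℕ) = (j:ℕ)+1 ∨ ((i:ℕ) = 0 ∧ (j:ℕ) = m+1) := by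
  have hv : ∀ a b : Fin (m+2), a - b = 1 → (a:ℕ) = ((b:ℕ)+1) % (m+2) := by
    intro a b hab
    have h2 : b + (a - b) = a := by rw [add_sub_cancel]
    rw [hab] at h2
    rw [← h2, Fin.add_def, Fin.val_one]
  have hi := i.isLt
  have hj := j.isLt
  rw [cycleGraph_adj] at h
  rcases h with h | h
  · have hval := hv _ _ h
    rcases Nat.lt_or_ge ((j:ℕ)+1) (m+2) with hc | hc
    · rw [Nat.mod_eq_of_lt hc] at hval; exact Or.inr (Or.inr (Or.inl hval))
    · have hj1 : (j:ℕ)+1 = m+2 := by omega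
      rw [hj1, Nat.mod_self] at hval
      exact Or.inr (Or.inr (Or.inr ⟨hval, by omega⟩))
  · have hval := hv _ _ h
    rcases Nat.lt_or_ge ((i:ℕ)+1) (m+2) with hc | hc
    · rw [Nat.mod_eq_of_lt hc] at hval; exact Or.inl hval
    · have hi1 : (i:ℕ)+1 = m+2 := by omega
      rw [hi1, Nat.mod_self] at hval
      exact Or.inr (Or.inl ⟨hval, by omega⟩)

lemma aux_no_triangle {m : ℕ} (hm : 2 ≤ m) {i j k : Fin (m+2)}
    (hij : (cycleGraph (m+2)).Adj i j) (hik : (cycleGraph (m+2)).Adj i k)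
    (hjk : (cycleGraph (m+2)).Adj j k) : False := by
  have d1 : (i:ℕ) ≠ (j:ℕ) := fun h => hij.ne (Fin.ext h)
  have d2 : (i:ℕ) ≠ (k:ℕ) := fun h => hik.ne (Fin.ext h)
  have d3 : (j:ℕ) ≠ (k:ℕ) := fun h => hjk.ne (Fin.ext h)
  have hi := i.isLt
  have hj := j.isLt
  have hk := k.isLt
  have a1 := aux_cycle_adj_val hij
  have a2 := aux_cycle_adj_val hik
  have a3 := aux_cycle_adj_val hjk
  rcases a1 with h1|⟨h1,h1'⟩|h1|⟨h1,h1'⟩ <;> rcases a2 with h2|⟨h2,h2'⟩|h2|⟨h2,h2'⟩ <;>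
    rcases a3 with h3|⟨h3,h3'⟩|h3|⟨h3,h3'⟩ <;> omega

lemma aux_succ_adj {m : ℕ} (i : Fin (m+2)) : (cycleGraph (m+2)).Adj i (i+1) := by
  rw [cycleGraph_adj]
  right
  rw [add_sub_cancel_left]

lemma aux_adj_succ_or {m : ℕ} {i j : Fin (m+2)} (h : (cycleGraph (m+2)).Adj i j) :
    j = i + 1 ∨ i = j + 1 := by
  rw [cycleGraph_adj] at h
  rcases h with h | h
  · right; rw [sub_eq_iff_eq_add] at h; exact h.trans (add_comm 1 j)
  · left; rw [sub_eq_iff_eq_add] at h; exact h.trans (add_comm 1 i)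

lemma aux_add_two_ne {m : ℕ} (i : Fin (m+1+2)) : i + 1 + 1 ≠ i ∧ i + 1 + 1 ≠ i + 1 := by
  have hval : ((1 + 1 : Fin (m+1+2)) : ℕ) = 2 := by
    rw [Fin.add_def, Fin.val_one]
    exact Nat.mod_eq_of_lt (by omega)
  constructor
  · intro h
    rw [add_assoc i 1 1] at h
    have h0 : i + (1+1) = i + 0 := by rw [add_zero]; exact h
    have hc := add_left_cancel h0
    rw [Fin.ext_iff, hval] at hc
    simp at hc
  · intro h
    rw [add_assoc i 1 1] at h
    have hc := add_left_cancel h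
    rw [Fin.ext_iff, hval, Fin.val_one] at hc
    omega

lemma aux_triangle_edges {V : Type*} [Fintype V] [DecidableEq V] (G : SimpleGraph V)
    [DecidableRel G.Adj] {t : Finset V} (ht : IsTriangle G t) :
    (G.edgeFinset.filter (fun e => ∀ x ∈ e, x ∈ t)).card = 3 := by
  obtain ⟨a, b, c, hab, hac, hbc, rfl⟩ := Finset.card_eq_three.mp ht.1
  have hGab : G.Adj a b := ht.2 a (by simp) b (by simp) hab
  have hGac : G.Adj a c := ht.2 a (by simp) c (by simp) hac
  have hGbc : G.Adj b c := ht.2 b (by simp) c (by simp) hbc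
  have heq : (G.edgeFinset.filter (fun e => ∀ x ∈ e, x ∈ ({a,b,c} : Finset V)))
      = {s(a,b), s(a,c), s(b,c)} := by
    ext e
    obtain ⟨x, y, rfl⟩ := sym2_exists_eq e
    simp only [Finset.mem_filter, mem_edgeFinset, mem_edgeSet, Sym2.mem_iff,
      Finset.mem_insert, Finset.mem_singleton, Sym2.eq_iff]
    constructor
    · rintro ⟨hadj, hsub⟩
      have hx := hsub x (Or.inl rfl)
      have hy := hsub y (Or.inr rfl)
      have hne := hadj.ne
      rcases hx with rfl|rfl|rfl <;> rcases hy with rfl|rfl|rfl <;> tauto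
    · rintro ((⟨rfl,rfl⟩|⟨rfl,rfl⟩)|(⟨rfl,rfl⟩|⟨rfl,rfl⟩)|(⟨rfl,rfl⟩|⟨rfl,rfl⟩)) <;>
      constructor <;> first
        | (intro z hz; rcases hz with rfl|rfl <;> simp [Finset.mem_insert])
        | exact hGab | exact hGab.symm | exact hGac | exact hGac.symm
        | exact hGbc | exact hGbc.symm
  rw [heq]
  rw [Finset.card_insert_of_notMem, Finset.card_insert_of_notMem, Finset.card_singleton]
  · simp only [Finset.mem_singleton, Sym2.eq_iff]
    tauto
  · simp only [Finset.mem_insert, Finset.mem_singleton, Sym2.eq_iff]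
    push_neg
    tauto

set_option maxHeartbeats 1000000 in
/-- If `G` is minimal forbidden for `Cₙ` and not `K₅ - K₃`, then for any fixed
induced `n`-cycle of `T(G)`, no edge of `G` lies in more than two cycle-triangles,
`G` has exactly `2n` edges, of which exactly `n` lie in exactly one cycle-triangle
and exactly `n` in exactly two. -/
theorem minimal_forbidden_structure {V : Type*} [Fintype V] [DecidableEq V]
    (G : SimpleGraph V) (n : ℕ) (hn : 3 ≤ n)
    (hK5 : IsEmpty (G ≃g K5mK3))
    (hmin : MinimalForbiddenFor G n)
    (f : cycleGraph n ↪g triangleGraph G) :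
    (∀ u v : V, G.Adj u v →
        {i : Fin n | u ∈ (f i).1 ∧ v ∈ (f i).1}.ncard ≤ 2) ∧
    G.edgeSet.ncard = 2 * n ∧
    {e : Sym2 V | e ∈ G.edgeSet ∧
        {i : Fin n | ∀ x ∈ e, x ∈ (f i).1}.ncard = 1}.ncard = n ∧
    {e : Sym2 V | e ∈ G.edgeSet ∧
        {i : Fin n | ∀ x ∈ e, x ∈ (f i).1}.ncard = 2}.ncard = n := by
  classical
  obtain ⟨m, rfl⟩ : ∃ m, n = m + 1 + 2 := ⟨n - 3, by omega⟩
  set T : Fin (m+1+2) → Finset V := fun i => (f i).1 with hTdef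
  have hT3 : ∀ i, IsTriangle G (T i) := fun i => (f i).2
  have hfinj : Function.Injective f := f.injective
  have hTne : ∀ {i j : Fin (m+1+2)}, i ≠ j → T i ≠ T j :=
    fun hij hTij => hij (hfinj (Subtype.ext hTij))
  have hAdjT : ∀ i j, (cycleGraph (m+1+2)).Adj i j ↔ (T i ≠ T j ∧ (T i ∩ T j).card = 2) := by
    intro i j
    rw [← f.map_rel_iff]
    simp only [triangleGraph]
    constructor
    · rintro ⟨h1, h2⟩
      exact ⟨fun hc => h1 (Subtype.ext hc), h2⟩
    · rintro ⟨h1, h2⟩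
      exact ⟨fun hc => h1 (congrArg Subtype.val hc), h2⟩
  -- the subgraph spanned by the cycle-triangles
  set H : G.Subgraph :=
    { verts := ⋃ i, ↑(T i)
      Adj := fun x y => x ≠ y ∧ ∃ i, x ∈ T i ∧ y ∈ T i
      adj_sub := by rintro x y ⟨hxy, i, hx, hy⟩; exact (hT3 i).2 x hx y hy hxy
      edge_vert := by rintro x y ⟨hxy, i, hx, hy⟩; exact Set.mem_iUnion.2 ⟨i, hx⟩
      symm := ⟨by rintro x y ⟨hxy, i, hx, hy⟩; exact ⟨hxy.symm, i, hy, hx⟩⟩ } with hHdef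
  have hmemV : ∀ (i : Fin (m+1+2)) (x : V), x ∈ T i → x ∈ H.verts :=
    fun i x hx => Set.mem_iUnion.2 ⟨i, hx⟩
  have hsub_card : ∀ (s : Finset V), (∀ x ∈ s, x ∈ H.verts) →
      (s.subtype (· ∈ H.verts)).card = s.card := by
    intro s hs
    rw [Finset.card_subtype, Finset.filter_true_of_mem hs]
  have hsub_eq : ∀ (s t : Finset V), (∀ x ∈ s, x ∈ H.verts) → (∀ x ∈ t, x ∈ H.verts) →
      s.subtype (· ∈ H.verts) = t.subtype (· ∈ H.verts) → s = t := by
    intro s t hs ht h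
    ext x
    constructor
    · intro hx
      have : (⟨x, hs x hx⟩ : {y // y ∈ H.verts}) ∈ s.subtype (· ∈ H.verts) :=
        Finset.mem_subtype.2 hx
      rw [h] at this
      exact Finset.mem_subtype.1 this
    · intro hx
      have : (⟨x, ht x hx⟩ : {y // y ∈ H.verts}) ∈ t.subtype (· ∈ H.verts) :=
        Finset.mem_subtype.2 hx
      rw [← h] at this
      exact Finset.mem_subtype.1 this
  have hsub_inter : ∀ (s t : Finset V),
      (s ∩ t).subtype (· ∈ H.verts) = s.subtype (· ∈ H.verts) ∩ t.subtype (· ∈ H.verts) := by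
    intro s t
    ext a
    simp [Finset.mem_subtype]
  have hHtri : ∀ i : Fin (m+1+2), IsTriangle H.coe ((T i).subtype (· ∈ H.verts)) := by
    intro i
    refine ⟨by rw [hsub_card _ (fun x hx => hmemV i x hx)]; exact (hT3 i).1, ?_⟩
    rintro ⟨u, hu⟩ hu' ⟨v, hv⟩ hv' huv
    rw [Finset.mem_subtype] at hu' hv'
    show H.Adj u v
    exact ⟨fun hc => huv (Subtype.ext hc), i, hu', hv'⟩
  have hHtop : H = ⊤ := by
    by_contra hne
    refine (hmin.2 H hne).false ?_
    refine ⟨⟨fun i => ⟨(T i).subtype (· ∈ H.verts), hHtri i⟩, ?_⟩, ?_⟩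
    · intro i j hij
      apply hfinj
      apply Subtype.ext
      exact hsub_eq _ _ (fun x hx => hmemV i x hx) (fun x hx => hmemV j x hx)
        (congrArg Subtype.val hij)
    · intro i j
      show ((triangleGraph H.coe).Adj _ _) ↔ _
      rw [hAdjT]
      simp only [triangleGraph, Function.Embedding.coeFn_mk]
      show ((⟨(T i).subtype (· ∈ H.verts), hHtri i⟩ : {t // IsTriangle H.coe t}) ≠
          ⟨(T j).subtype (· ∈ H.verts), hHtri j⟩ ∧
          ((T i).subtype (· ∈ H.verts) ∩ (T j).subtype (· ∈ H.verts)).card = 2) ↔ _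
      rw [← hsub_inter]
      rw [hsub_card (T i ∩ T j) (fun x hx => hmemV i x (Finset.mem_inter.1 hx).1)]
      constructor
      · rintro ⟨h1, h2⟩
        refine ⟨fun hc => h1 ?_, h2⟩
        apply Subtype.ext
        show (T i).subtype _ = (T j).subtype _
        rw [hc]
      · rintro ⟨h1, h2⟩
        refine ⟨fun hc => h1 ?_, h2⟩
        exact hsub_eq _ _ (fun x hx => hmemV i x hx) (fun x hx => hmemV j x hx)
          (congrArg Subtype.val hc)
  have hcov : ∀ {u v : V}, G.Adj u v → ∃ i, u ∈ T i ∧ v ∈ T i := by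
    intro u v h
    have h2 : H.Adj u v := by rw [hHtop]; exact h
    exact h2.2
  have hverts : ∀ x : V, ∃ i, x ∈ T i := by
    intro x
    have h2 : x ∈ H.verts := by rw [hHtop]; trivial
    obtain ⟨s, ⟨i, rfl⟩, hx⟩ := h2
    exact ⟨i, hx⟩
  -- claim 1
  have claim1 : ∀ u v : V, G.Adj u v → {i : Fin (m+1+2) | u ∈ T i ∧ v ∈ T i}.ncard ≤ 2 := by
    intro u v huv
    have hSeq : {i : Fin (m+1+2) | u ∈ T i ∧ v ∈ T i}
        = ↑(Finset.univ.filter (fun i => u ∈ T i ∧ v ∈ T i)) := by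
      ext i; simp
    rw [hSeq, Set.ncard_coe_finset]
    by_contra hgt
    push_neg at hgt
    obtain ⟨i, j, k, hiS, hjS, hkS, hij, hik, hjk⟩ := Finset.two_lt_card_iff.1 hgt
    rw [Finset.mem_filter] at hiS hjS hkS
    have hadjc : ∀ {a b : Fin (m+1+2)}, a ≠ b → u ∈ T a ∧ v ∈ T a → u ∈ T b ∧ v ∈ T b →
        (cycleGraph (m+1+2)).Adj a b := by
      rintro a b hab ⟨hua, hva⟩ ⟨hub, hvb⟩
      rw [hAdjT]
      refine ⟨hTne hab, le_antisymm (aux_tri_inter_card_le (hT3 a) (hT3 b) (hTne hab)) ?_⟩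
      have hsub2 : ({u, v} : Finset V) ⊆ T a ∩ T b := by
        intro x hx
        rcases Finset.mem_insert.1 hx with rfl | hx
        · exact Finset.mem_inter.2 ⟨hua, hub⟩
        · rw [Finset.mem_singleton] at hx; subst hx
          exact Finset.mem_inter.2 ⟨hva, hvb⟩
      calc 2 = ({u, v} : Finset V).card := (Finset.card_pair huv.ne).symm
        _ ≤ (T a ∩ T b).card := Finset.card_le_card hsub2
    have haij := hadjc hij hiS.2 hjS.2
    have haik := hadjc hik hiS.2 hkS.2
    have hajk := hadjc hjk hjS.2 hkS.2
    rcases Nat.eq_zero_or_pos m with rfl | hm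
    · -- n = 3 : the K₅ - K₃ case
      have hall : ∀ l : Fin (0+1+2), u ∈ T l ∧ v ∈ T l := by
        intro l
        have hl : l = i ∨ l = j ∨ l = k := by
          have hi' := i.isLt
          have hj' := j.isLt
          have hk' := k.isLt
          have hl' := l.isLt
          have d1 : (i:ℕ) ≠ (j:ℕ) := fun h => hij (Fin.ext h)
          have d2 : (i:ℕ) ≠ (k:ℕ) := fun h => hik (Fin.ext h)
          have d3 : (j:ℕ) ≠ (k:ℕ) := fun h => hjk (Fin.ext h)
          rw [Fin.ext_iff, Fin.ext_iff, Fin.ext_iff]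
          omega
        rcases hl with rfl | rfl | rfl
        exacts [hiS.2, hjS.2, hkS.2]
      have hthird : ∀ l : Fin (0+1+2), ∃ w, w ≠ u ∧ w ≠ v ∧ T l = {u, v, w} := by
        intro l
        obtain ⟨hu, hv⟩ := hall l
        have hnsub : ¬ (T l ⊆ {u, v}) := by
          intro hc
          have := Finset.card_le_card hc
          rw [(hT3 l).1] at this
          have := Finset.card_insert_le u ({v} : Finset V)
          simp at this ⊢
          omega
        obtain ⟨w, hwl, hwuv⟩ := Finset.not_subset.1 hnsub
        simp only [Finset.mem_insert, Finset.mem_singleton, not_or] at hwuv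
        refine ⟨w, hwuv.1, hwuv.2, ?_⟩
        have hsub : ({u, v, w} : Finset V) ⊆ T l := by
          intro z hz
          rcases Finset.mem_insert.1 hz with rfl | hz
          · exact hu
          rcases Finset.mem_insert.1 hz with rfl | hz
          · exact hv
          rw [Finset.mem_singleton] at hz; subst hz
          exact hwl
        have hc3 : ({u, v, w} : Finset V).card = 3 := by
          rw [Finset.card_insert_of_notMem, Finset.card_insert_of_notMem,
            Finset.card_singleton]
          · simp only [Finset.mem_singleton]
            exact fun hc => hwuv.2 hc.symm
          · simp only [Finset.mem_insert, Finset.mem_singleton, not_or]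
            exact ⟨huv.ne, fun hc => hwuv.1 hc.symm⟩
        exact (Finset.eq_of_subset_of_card_le hsub (by rw [(hT3 l).1, hc3])).symm
      choose a hau hav haT using hthird
      have hmemT : ∀ (l : Fin (0+1+2)) (x : V), x ∈ T l ↔ x = u ∨ x = v ∨ x = a l := by
        intro l x
        rw [haT l]
        simp [Finset.mem_insert]
      have hadist : ∀ l l' : Fin (0+1+2), l ≠ l' → a l ≠ a l' := by
        intro l l' hll' hc
        apply hTne hll'
        rw [haT l, haT l', hc]
      have hGadj : ∀ x y : V, G.Adj x y ↔ (x ≠ y ∧ ∃ l, x ∈ T l ∧ y ∈ T l) :=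
        fun x y => ⟨fun h => ⟨h.ne, hcov h⟩, fun ⟨hne, l, hx, hy⟩ => (hT3 l).2 x hx y hy hne⟩
      have hA1 : G.Adj u v := huv
      have hA2 : ∀ l, G.Adj u (a l) :=
        fun l => (hGadj _ _).2 ⟨(hau l).symm, l, (hall l).1, (hmemT l (a l)).2 (Or.inr (Or.inr rfl))⟩
      have hA3 : ∀ l, G.Adj v (a l) :=
        fun l => (hGadj _ _).2 ⟨(hav l).symm, l, (hall l).2, (hmemT l (a l)).2 (Or.inr (Or.inr rfl))⟩
      have hA4 : ∀ l l' : Fin (0+1+2), l ≠ l' → ¬ G.Adj (a l) (a l') := by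
        intro l l' hll' hadj
        obtain ⟨-, t, h1, h2⟩ := (hGadj _ _).1 hadj
        rw [hmemT] at h1 h2
        rcases h1 with h1 | h1 | h1
        · exact hau l h1
        · exact hav l h1
        rcases h2 with h2 | h2 | h2
        · exact hau l' h2
        · exact hav l' h2
        have hlt : l = t := by by_contra hc; exact hadist l t hc h1
        have hlt' : l' = t := by by_contra hc; exact hadist l' t hc h2
        exact hll' (hlt.trans hlt'.symm)
      set w : Fin 5 → V := ![a 0, a 1, a 2, u, v] with hwdef
      have n01 : a 0 ≠ a 1 := hadist _ _ (by decide)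
      have n02 : a 0 ≠ a 2 := hadist _ _ (by decide)
      have n12 : a 1 ≠ a 2 := hadist _ _ (by decide)
      have nuv : u ≠ v := huv.ne
      have n0u : a 0 ≠ u := hau 0
      have n1u : a 1 ≠ u := hau 1
      have n2u : a 2 ≠ u := hau 2
      have n0v : a 0 ≠ v := hav 0
      have n1v : a 1 ≠ v := hav 1
      have n2v : a 2 ≠ v := hav 2
      have hwinj : Function.Injective w := by
        intro x y
        fin_cases x <;> fin_cases y
        exacts [fun _ => rfl, fun h => absurd h n01, fun h => absurd h n02,
          fun h => absurd h n0u, fun h => absurd h n0v,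
          fun h => absurd h (Ne.symm n01), fun _ => rfl, fun h => absurd h n12,
          fun h => absurd h n1u, fun h => absurd h n1v,
          fun h => absurd h (Ne.symm n02), fun h => absurd h (Ne.symm n12), fun _ => rfl,
          fun h => absurd h n2u, fun h => absurd h n2v,
          fun h => absurd h (Ne.symm n0u), fun h => absurd h (Ne.symm n1u),
          fun h => absurd h (Ne.symm n2u), fun _ => rfl, fun h => absurd h nuv,
          fun h => absurd h (Ne.symm n0v), fun h => absurd h (Ne.symm n1v),
          fun h => absurd h (Ne.symm n2v), fun h => absurd h (Ne.symm nuv), fun _ => rfl]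
      have hwsurj : Function.Surjective w := by
        intro x
        obtain ⟨l, hl⟩ := hverts x
        rw [hmemT] at hl
        rcases hl with rfl | rfl | rfl
        · exact ⟨3, rfl⟩
        · exact ⟨4, rfl⟩
        · fin_cases l
          exacts [⟨0, rfl⟩, ⟨1, rfl⟩, ⟨2, rfl⟩]
      have iso : K5mK3 ≃g G := by
        refine ⟨Equiv.ofBijective w ⟨hwinj, hwsurj⟩, ?_⟩
        intro x y
        show G.Adj (w x) (w y) ↔ K5mK3.Adj x y
        fin_cases x <;> fin_cases y
        exacts [iff_of_false (fun h => G.loopless.irrefl _ h) (fun h => h.1 rfl),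
          iff_of_false (hA4 0 1 (by decide)) (fun h => h.2 ⟨by decide, by decide⟩),
          iff_of_false (hA4 0 2 (by decide)) (fun h => h.2 ⟨by decide, by decide⟩),
          iff_of_true (hA2 0).symm ⟨by decide, by decide⟩,
          iff_of_true (hA3 0).symm ⟨by decide, by decide⟩,
          iff_of_false (hA4 1 0 (by decide)) (fun h => h.2 ⟨by decide, by decide⟩),
          iff_of_false (fun h => G.loopless.irrefl _ h) (fun h => h.1 rfl),
          iff_of_false (hA4 1 2 (by decide)) (fun h => h.2 ⟨by decide, by decide⟩),
          iff_of_true (hA2 1).symm ⟨by decide, by decide⟩,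
          iff_of_true (hA3 1).symm ⟨by decide, by decide⟩,
          iff_of_false (hA4 2 0 (by decide)) (fun h => h.2 ⟨by decide, by decide⟩),
          iff_of_false (hA4 2 1 (by decide)) (fun h => h.2 ⟨by decide, by decide⟩),
          iff_of_false (fun h => G.loopless.irrefl _ h) (fun h => h.1 rfl),
          iff_of_true (hA2 2).symm ⟨by decide, by decide⟩,
          iff_of_true (hA3 2).symm ⟨by decide, by decide⟩,
          iff_of_true (hA2 0) ⟨by decide, by decide⟩,
          iff_of_true (hA2 1) ⟨by decide, by decide⟩,
          iff_of_true (hA2 2) ⟨by decide, by decide⟩,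
          iff_of_false (fun h => G.loopless.irrefl _ h) (fun h => h.1 rfl),
          iff_of_true hA1 ⟨by decide, by decide⟩,
          iff_of_true (hA3 0) ⟨by decide, by decide⟩,
          iff_of_true (hA3 1) ⟨by decide, by decide⟩,
          iff_of_true (hA3 2) ⟨by decide, by decide⟩,
          iff_of_true hA1.symm ⟨by decide, by decide⟩,
          iff_of_false (fun h => G.loopless.irrefl _ h) (fun h => h.1 rfl)]
      exact hK5.false iso.symm
    · exact aux_no_triangle (m := m + 1) (by omega) haij haik hajk
  -- counting
  set Sf : Sym2 V → Finset (Fin (m+1+2)) :=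
    fun e => Finset.univ.filter (fun i => ∀ x ∈ e, x ∈ T i) with hSfdef
  have hSf_ncard : ∀ e : Sym2 V, {i : Fin (m+1+2) | ∀ x ∈ e, x ∈ T i}.ncard = (Sf e).card := by
    intro e
    rw [show {i : Fin (m+1+2) | ∀ x ∈ e, x ∈ T i} = ↑(Sf e) by ext i; simp [hSfdef],
      Set.ncard_coe_finset]
  have hSfpair : ∀ x y : V, Sf s(x, y) = Finset.univ.filter (fun i => x ∈ T i ∧ y ∈ T i) := by
    intro x y
    apply Finset.filter_congr
    intro i _
    simp [Sym2.mem_iff, or_imp, forall_and]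
  have hSf1 : ∀ e ∈ G.edgeFinset, 1 ≤ (Sf e).card := by
    intro e he
    obtain ⟨x, y, rfl⟩ := sym2_exists_eq e
    rw [mem_edgeFinset, mem_edgeSet] at he
    obtain ⟨i, hi⟩ := hcov he
    refine Finset.card_pos.2 ⟨i, ?_⟩
    rw [hSfpair]
    simp [hi.1, hi.2]
  have hSf2 : ∀ e ∈ G.edgeFinset, (Sf e).card ≤ 2 := by
    intro e he
    obtain ⟨x, y, rfl⟩ := sym2_exists_eq e
    rw [mem_edgeFinset, mem_edgeSet] at he
    have := claim1 x y he
    rwa [show {i : Fin (m+1+2) | x ∈ T i ∧ y ∈ T i}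
        = ↑(Sf s(x,y)) by rw [hSfpair]; ext i; simp, Set.ncard_coe_finset] at this
  have hsum : ∑ e ∈ G.edgeFinset, (Sf e).card = 3 * (m+1+2) := by
    have h1 : ∀ e ∈ G.edgeFinset, (Sf e).card
        = ∑ i : Fin (m+1+2), (if ∀ x ∈ e, x ∈ T i then 1 else 0) := by
      intro e _
      rw [hSfdef]
      exact Finset.card_filter _ _
    rw [Finset.sum_congr rfl h1, Finset.sum_comm]
    have h2 : ∀ i : Fin (m+1+2),
        (∑ e ∈ G.edgeFinset, if ∀ x ∈ e, x ∈ T i then 1 else 0) = 3 := by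
      intro i
      rw [← Finset.card_filter]
      exact aux_triangle_edges G (hT3 i)
    rw [Finset.sum_congr rfl (fun i _ => h2 i)]
    simp [Finset.card_univ, mul_comm]
  have hadjsucc : ∀ i : Fin (m+1+2), (cycleGraph (m+1+2)).Adj i (i+1) :=
    fun i => aux_succ_adj (m := m+1) i
  have hcard2 : ∀ i, (T i ∩ T (i+1)).card = 2 := fun i => ((hAdjT _ _).1 (hadjsucc i)).2
  have hE2spec : ∀ i : Fin (m+1+2), ∃ q : V × V, q.1 ≠ q.2 ∧ T i ∩ T (i+1) = {q.1, q.2} := by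
    intro i
    obtain ⟨x, y, hxy, h⟩ := Finset.card_eq_two.1 (hcard2 i)
    exact ⟨(x, y), hxy, h⟩
  choose q hq1 hq2 using hE2spec
  set E2 : Fin (m+1+2) → Sym2 V := fun i => s((q i).1, (q i).2) with hE2def
  have hqT : ∀ i, (q i).1 ∈ T i ∧ (q i).2 ∈ T i ∧ (q i).1 ∈ T (i+1) ∧ (q i).2 ∈ T (i+1) := by
    intro i
    have h1 : (q i).1 ∈ T i ∩ T (i+1) := by rw [hq2]; simp
    have h2 : (q i).2 ∈ T i ∩ T (i+1) := by rw [hq2]; simp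
    rw [Finset.mem_inter] at h1 h2
    exact ⟨h1.1, h2.1, h1.2, h2.2⟩
  have hE2edge : ∀ i, E2 i ∈ G.edgeFinset := by
    intro i
    rw [hE2def, mem_edgeFinset, mem_edgeSet]
    exact (hT3 i).2 _ (hqT i).1 _ (hqT i).2.1 (hq1 i)
  have hE2mem : ∀ i : Fin (m+1+2), i ∈ Sf (E2 i) ∧ (i+1) ∈ Sf (E2 i) := by
    intro i
    rw [hE2def, hSfpair]
    refine ⟨?_, ?_⟩
    · simp only [Finset.mem_filter, Finset.mem_univ, true_and]
      exact ⟨(hqT i).1, (hqT i).2.1⟩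
    · simp only [Finset.mem_filter, Finset.mem_univ, true_and]
      exact ⟨(hqT i).2.2.1, (hqT i).2.2.2⟩
  have hE2card : ∀ i, (Sf (E2 i)).card = 2 := by
    intro i
    refine le_antisymm (hSf2 _ (hE2edge i)) ?_
    have hsub : ({i, i+1} : Finset (Fin (m+1+2))) ⊆ Sf (E2 i) := by
      intro a ha
      rcases Finset.mem_insert.1 ha with rfl | ha
      · exact (hE2mem a).1
      · rw [Finset.mem_singleton] at ha; subst ha
        exact (hE2mem i).2
    calc 2 = ({i, i+1} : Finset (Fin (m+1+2))).card := (Finset.card_pair (hadjsucc i).ne).symm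
      _ ≤ _ := Finset.card_le_card hsub
  have hE2inj : Function.Injective E2 := by
    intro i j hij
    by_contra hne
    have hm1 : i ∈ Sf (E2 i) := (hE2mem i).1
    have hm2 : i + 1 ∈ Sf (E2 i) := (hE2mem i).2
    have hm3 : j ∈ Sf (E2 i) := by rw [hij]; exact (hE2mem j).1
    have hm4 : j + 1 ∈ Sf (E2 i) := by rw [hij]; exact (hE2mem j).2
    have h3 : 2 < (Sf (E2 i)).card := by
      by_cases hji : j = i + 1
      · subst hji
        exact Finset.two_lt_card_iff.2 ⟨i, i+1, (i+1)+1, hm1, hm2, hm4, (hadjsucc i).ne,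
          fun hc => (aux_add_two_ne (m := m) i).1 hc.symm, (hadjsucc (i+1)).ne⟩
      · exact Finset.two_lt_card_iff.2 ⟨i, i+1, j, hm1, hm2, hm3, (hadjsucc i).ne, hne,
          fun hc => hji hc.symm⟩
    have := hSf2 _ (hE2edge i)
    omega
  have hBsurj : ∀ e ∈ G.edgeFinset.filter (fun e => (Sf e).card = 2), ∃ i, E2 i = e := by
    intro e he
    rw [Finset.mem_filter] at he
    obtain ⟨heE, h2⟩ := he
    obtain ⟨x, y, rfl⟩ := sym2_exists_eq e
    rw [mem_edgeFinset, mem_edgeSet] at heE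
    obtain ⟨a, b, hab, hSfe⟩ := Finset.card_eq_two.1 h2
    have hamem : a ∈ Sf s(x, y) := by rw [hSfe]; simp
    have hbmem : b ∈ Sf s(x, y) := by rw [hSfe]; simp
    rw [hSfpair] at hamem hbmem
    rw [Finset.mem_filter] at hamem hbmem
    have hcadj : (cycleGraph (m+1+2)).Adj a b := by
      rw [hAdjT]
      refine ⟨hTne hab, le_antisymm (aux_tri_inter_card_le (hT3 a) (hT3 b) (hTne hab)) ?_⟩
      have hsub2 : ({x, y} : Finset V) ⊆ T a ∩ T b := by
        intro z hz
        rcases Finset.mem_insert.1 hz with rfl | hz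
        · exact Finset.mem_inter.2 ⟨hamem.2.1, hbmem.2.1⟩
        · rw [Finset.mem_singleton] at hz; subst hz
          exact Finset.mem_inter.2 ⟨hamem.2.2, hbmem.2.2⟩
      calc 2 = ({x, y} : Finset V).card := (Finset.card_pair heE.ne).symm
        _ ≤ (T a ∩ T b).card := Finset.card_le_card hsub2
    have key : ∀ c : Fin (m+1+2), x ∈ T c → y ∈ T c → x ∈ T (c+1) → y ∈ T (c+1) →
        E2 c = s(x, y) := by
      intro c hxc hyc hxc1 hyc1
      have hsub2 : ({x, y} : Finset V) ⊆ T c ∩ T (c+1) := by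
        intro z hz
        rcases Finset.mem_insert.1 hz with rfl | hz
        · exact Finset.mem_inter.2 ⟨hxc, hxc1⟩
        · rw [Finset.mem_singleton] at hz; subst hz
          exact Finset.mem_inter.2 ⟨hyc, hyc1⟩
      have heq2 : ({x, y} : Finset V) = T c ∩ T (c+1) :=
        Finset.eq_of_subset_of_card_le hsub2
          (by rw [hcard2 c, Finset.card_pair heE.ne])
      rw [hq2 c] at heq2
      have hx' : x ∈ ({(q c).1, (q c).2} : Finset V) := by rw [← heq2]; simp
      have hy' : y ∈ ({(q c).1, (q c).2} : Finset V) := by rw [← heq2]; simp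
      simp only [Finset.mem_insert, Finset.mem_singleton] at hx' hy'
      rw [hE2def]
      rw [Sym2.eq_iff]
      have hne := heE.ne
      rcases hx' with rfl | rfl <;> rcases hy' with rfl | rfl <;> tauto
    rcases aux_adj_succ_or (m := m+1) hcadj with hba | hba
    · subst hba
      exact ⟨a, key a hamem.2.1 hamem.2.2 hbmem.2.1 hbmem.2.2⟩
    · subst hba
      exact ⟨b, key b hbmem.2.1 hbmem.2.2 hamem.2.1 hamem.2.2⟩
  have hBcard : (G.edgeFinset.filter (fun e => (Sf e).card = 2)).card = m+1+2 := by
    have hbij := Finset.card_bij (s := (Finset.univ : Finset (Fin (m+1+2))))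
      (t := G.edgeFinset.filter (fun e => (Sf e).card = 2))
      (fun i _ => E2 i)
      (fun i _ => Finset.mem_filter.2 ⟨hE2edge i, hE2card i⟩)
      (fun i _ j _ h => hE2inj h)
      (fun e he => by obtain ⟨i, hi⟩ := hBsurj e he; exact ⟨i, Finset.mem_univ i, hi⟩)
    rw [← hbij, Finset.card_univ, Fintype.card_fin]
  have hfilterB : G.edgeFinset.filter (fun e => ¬((Sf e).card = 1))
      = G.edgeFinset.filter (fun e => (Sf e).card = 2) := by
    apply Finset.filter_congr
    intro e he
    have h1 := hSf1 e he
    have h2 := hSf2 e he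
    constructor
    · intro h; omega
    · intro h; omega
  have hAB : (G.edgeFinset.filter (fun e => (Sf e).card = 1)).card
      + (G.edgeFinset.filter (fun e => (Sf e).card = 2)).card = G.edgeFinset.card := by
    rw [← hfilterB]
    exact Finset.card_filter_add_card_filter_not _
  have hsum2 : ∑ e ∈ G.edgeFinset, (Sf e).card
      = (G.edgeFinset.filter (fun e => (Sf e).card = 1)).card
        + (G.edgeFinset.filter (fun e => (Sf e).card = 2)).card * 2 := by
    rw [← Finset.sum_filter_add_sum_filter_not G.edgeFinset (fun e => (Sf e).card = 1)]
    congr 1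
    · rw [Finset.sum_congr rfl (fun e he => (Finset.mem_filter.1 he).2), Finset.sum_const,
        smul_eq_mul, mul_one]
    · rw [hfilterB, Finset.sum_congr rfl (fun e he => (Finset.mem_filter.1 he).2),
        Finset.sum_const, smul_eq_mul]
  have hAcard : (G.edgeFinset.filter (fun e => (Sf e).card = 1)).card = m+1+2 := by omega
  have hEcard : G.edgeFinset.card = 2 * (m+1+2) := by omega
  refine ⟨claim1, ?_, ?_, ?_⟩
  · rw [← Set.ncard_coe_finset, coe_edgeFinset] at hEcard
    exact hEcard
  · rw [show {e : Sym2 V | e ∈ G.edgeSet ∧ {i : Fin (m+1+2) | ∀ x ∈ e, x ∈ T i}.ncard = 1}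
        = ↑(G.edgeFinset.filter (fun e => (Sf e).card = 1)) by
      ext e
      simp only [Set.mem_setOf_eq, Finset.coe_filter, mem_edgeFinset, hSf_ncard e]]
    rw [Set.ncard_coe_finset]
    exact hAcard
  · rw [show {e : Sym2 V | e ∈ G.edgeSet ∧ {i : Fin (m+1+2) | ∀ x ∈ e, x ∈ T i}.ncard = 2}
        = ↑(G.edgeFinset.filter (fun e => (Sf e).card = 2)) by
      ext e
      simp only [Set.mem_setOf_eq, Finset.coe_filter, mem_edgeFinset, hSf_ncard e]]
    rw [Set.ncard_coe_finset]
    exact hBcard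
end

section
/- The triangle graph T(G) of a graph G contains an induced 4-cycle if and only if G contains a (not necessarily induced) subgraph isomorphic to the wheel W_4 = K_1 ∨ C_4. -/
open SimpleGraph

/-- Auxiliary: the wheel graph `W₄` has decidable adjacency. -/
instance : DecidableRel (wheel 4).Adj := fun a b =>
  decidable_of_iff' _ (SimpleGraph.fromRel_adj _ a b)

/-- Auxiliary: labelling of the 5 wheel vertices by `Fin 5` (hub first). -/
def fin5ToW : Fin 5 → Option (Fin 4) := ![none, some 0, some 1, some 2, some 3]

/-- Auxiliary: the four triangles of the wheel, as subsets of `Fin 5`. -/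
def sIdx : Fin 4 → Finset (Fin 5) := ![{0,1,2},{0,2,3},{0,3,4},{0,4,1}]

/-- Auxiliary: a map `Option (Fin 4) → V` given a hub and four rim vertices. -/
def wheelMap {V : Type*} (c u0 u1 u2 u3 : V) : Option (Fin 4) → V :=
  fun o => o.elim c
    (fun i => if i.val = 0 then u0 else if i.val = 1 then u1 else if i.val = 2 then u2 else u3)

/-- `T(G)` contains an induced 4-cycle iff `G` contains a subgraph isomorphic to
the wheel `W₄`. -/
theorem triangleGraph_C4_iff {V : Type*} [Fintype V] [DecidableEq V]
    (G : SimpleGraph V) :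
    Nonempty (cycleGraph 4 ↪g triangleGraph G) ↔ HasSubgraphIso (wheel 4) G := by
  constructor
  · -- forward direction
      intro hn
      obtain ⟨e⟩ := hn
      have htri : ∀ i : Fin 4, IsTriangle G (e i).1 := fun i => (e i).2
      have hcard : ∀ i : Fin 4, ((e i : Finset V)).card = 3 := fun i => (htri i).1
      have hne : ∀ i j : Fin 4, i ≠ j → ((e i : Finset V)) ≠ (e j : Finset V) := by
        intro i j hij hEq
        exact hij (e.injective (Subtype.ext hEq))
      have hadj : ∀ i j : Fin 4, (cycleGraph 4).Adj i j →
          (((e i : Finset V)) ∩ (e j : Finset V)).card = 2 :=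
        fun i j hij => (e.map_adj_iff.mpr hij).2
      have hnadj : ∀ i j : Fin 4, i ≠ j → ¬(cycleGraph 4).Adj i j →
          (((e i : Finset V)) ∩ (e j : Finset V)).card ≤ 1 := by
        intro i j hij hna
        by_contra hle
        have hci := hcard i
        have hcj := hcard j
        have hsub1 : (((e i : Finset V)) ∩ (e j : Finset V)).card ≤ ((e i : Finset V)).card :=
          Finset.card_le_card Finset.inter_subset_left
        have h2 : (((e i : Finset V)) ∩ (e j : Finset V)).card = 2 := by
          by_contra hc2
          have heq1 : ((e i : Finset V)) ∩ (e j : Finset V) = (e i : Finset V) :=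
            Finset.eq_of_subset_of_card_le Finset.inter_subset_left (by omega)
          have heq2 : ((e i : Finset V)) ∩ (e j : Finset V) = (e j : Finset V) :=
            Finset.eq_of_subset_of_card_le Finset.inter_subset_right (by omega)
          exact hne i j hij (heq1.symm.trans heq2)
        exact hna (e.map_adj_iff.mp ⟨fun hh => hij (e.injective hh), h2⟩)
      have h01 := hadj 0 1 (by decide)
      have h12 := hadj 1 2 (by decide)
      have h23 := hadj 2 3 (by decide)
      have h30 := hadj 3 0 (by decide)
      have h02 := hnadj 0 2 (by decide) (by decide)
      have h13 := hnadj 1 3 (by decide) (by decide)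
      -- the hub
      have hub : ∃ c, c ∈ (e 0 : Finset V) ∧ c ∈ (e 1 : Finset V) ∧ c ∈ (e 2 : Finset V) ∧
          c ∈ (e 3 : Finset V) := by
        have hx : (((e 0 : Finset V) ∩ (e 1 : Finset V)) ∩
            ((e 1 : Finset V) ∩ (e 2 : Finset V))).Nonempty := by
          rw [← Finset.card_pos]
          have hu : (((e 0 : Finset V) ∩ (e 1 : Finset V)) ∪ ((e 1 : Finset V) ∩ (e 2 : Finset V)))
              ⊆ (e 1 : Finset V) :=
            Finset.union_subset Finset.inter_subset_right Finset.inter_subset_left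
          have hcu := Finset.card_le_card hu
          have hui := Finset.card_union_add_card_inter
            ((e 0 : Finset V) ∩ (e 1 : Finset V)) ((e 1 : Finset V) ∩ (e 2 : Finset V))
          have hc1 := hcard 1
          omega
        have hy : (((e 2 : Finset V) ∩ (e 3 : Finset V)) ∩
            ((e 3 : Finset V) ∩ (e 0 : Finset V))).Nonempty := by
          rw [← Finset.card_pos]
          have hu : (((e 2 : Finset V) ∩ (e 3 : Finset V)) ∪ ((e 3 : Finset V) ∩ (e 0 : Finset V)))
              ⊆ (e 3 : Finset V) :=
            Finset.union_subset Finset.inter_subset_right Finset.inter_subset_left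
          have hcu := Finset.card_le_card hu
          have hui := Finset.card_union_add_card_inter
            ((e 2 : Finset V) ∩ (e 3 : Finset V)) ((e 3 : Finset V) ∩ (e 0 : Finset V))
          have hc3 := hcard 3
          omega
        obtain ⟨c, hc⟩ := hx
        obtain ⟨c', hc'⟩ := hy
        simp only [Finset.mem_inter] at hc hc'
        by_cases hcc : c = c'
        · subst hcc
          exact ⟨c, hc.1.1, hc.1.2, hc.2.2, hc'.1.2⟩
        · exfalso
          have hsub : ({c, c'} : Finset V) ⊆ (e 0 : Finset V) ∩ (e 2 : Finset V) := by
            intro y hy'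
            simp only [Finset.mem_insert, Finset.mem_singleton] at hy'
            rcases hy' with rfl | rfl
            · exact Finset.mem_inter.mpr ⟨hc.1.1, hc.2.2⟩
            · exact Finset.mem_inter.mpr ⟨hc'.2.2, hc'.1.1⟩
          have hle := Finset.card_le_card hsub
          rw [Finset.card_pair hcc] at hle
          omega
      obtain ⟨c, hc0, hc1, hc2, hc3⟩ := hub
      -- rim vertices
      have pairOf : ∀ i j : Fin 4, (cycleGraph 4).Adj i j → c ∈ (e i : Finset V) →
          c ∈ (e j : Finset V) →
          ∃ u, u ≠ c ∧ u ∈ (e i : Finset V) ∧ u ∈ (e j : Finset V) := by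
        intro i j hij hci hcj
        obtain ⟨a, b, hab, hEq⟩ := Finset.card_eq_two.mp (hadj i j hij)
        have hcmem : c ∈ ({a, b} : Finset V) := hEq ▸ Finset.mem_inter.mpr ⟨hci, hcj⟩
        simp only [Finset.mem_insert, Finset.mem_singleton] at hcmem
        rcases hcmem with h | h
        · subst h
          have hb : b ∈ (e i : Finset V) ∩ (e j : Finset V) := by rw [hEq]; simp
          exact ⟨b, Ne.symm hab, (Finset.mem_inter.mp hb).1, (Finset.mem_inter.mp hb).2⟩
        · subst h
          have ha : a ∈ (e i : Finset V) ∩ (e j : Finset V) := by rw [hEq]; simp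
          exact ⟨a, hab, (Finset.mem_inter.mp ha).1, (Finset.mem_inter.mp ha).2⟩
      obtain ⟨u0, hu0c, hu0a, hu0b⟩ := pairOf 0 1 (by decide) hc0 hc1
      obtain ⟨u1, hu1c, hu1a, hu1b⟩ := pairOf 1 2 (by decide) hc1 hc2
      obtain ⟨u2, hu2c, hu2a, hu2b⟩ := pairOf 2 3 (by decide) hc2 hc3
      obtain ⟨u3, hu3c, hu3a, hu3b⟩ := pairOf 3 0 (by decide) hc3 hc0
      -- separation lemmas
      have sep02 : ∀ x, x ≠ c → x ∈ (e 0 : Finset V) → x ∈ (e 2 : Finset V) → False := by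
        intro x hxc hx0 hx2
        have hsub : ({c, x} : Finset V) ⊆ (e 0 : Finset V) ∩ (e 2 : Finset V) := by
          intro y hy'
          simp only [Finset.mem_insert, Finset.mem_singleton] at hy'
          rcases hy' with rfl | rfl
          · exact Finset.mem_inter.mpr ⟨hc0, hc2⟩
          · exact Finset.mem_inter.mpr ⟨hx0, hx2⟩
        have hle := Finset.card_le_card hsub
        rw [Finset.card_pair (Ne.symm hxc)] at hle
        omega
      have sep13 : ∀ x, x ≠ c → x ∈ (e 1 : Finset V) → x ∈ (e 3 : Finset V) → False := by
        intro x hxc hx1 hx3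
        have hsub : ({c, x} : Finset V) ⊆ (e 1 : Finset V) ∩ (e 3 : Finset V) := by
          intro y hy'
          simp only [Finset.mem_insert, Finset.mem_singleton] at hy'
          rcases hy' with rfl | rfl
          · exact Finset.mem_inter.mpr ⟨hc1, hc3⟩
          · exact Finset.mem_inter.mpr ⟨hx1, hx3⟩
        have hle := Finset.card_le_card hsub
        rw [Finset.card_pair (Ne.symm hxc)] at hle
        omega
      -- distinctness of rim
      have d01 : u0 ≠ u1 := fun h => sep02 u0 hu0c hu0a (by rw [h]; exact hu1b)
      have d12 : u1 ≠ u2 := fun h => sep13 u1 hu1c hu1a (by rw [h]; exact hu2b)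
      have d23 : u2 ≠ u3 := fun h => sep02 u2 hu2c (by rw [h]; exact hu3b) hu2a
      have d30 : u3 ≠ u0 := fun h => sep13 u3 hu3c (by rw [h]; exact hu0b) hu3a
      have d02 : u0 ≠ u2 := fun h => sep13 u0 hu0c hu0b (by rw [h]; exact hu2b)
      have d13 : u1 ≠ u3 := fun h => sep02 u1 hu1c (by rw [h]; exact hu3b) hu1b
      -- edges
      have adjT : ∀ i : Fin 4, ∀ x ∈ (e i : Finset V), ∀ y ∈ (e i : Finset V), x ≠ y → G.Adj x y :=
        fun i => (htri i).2
      have Ac0 : G.Adj c u0 := adjT 0 c hc0 u0 hu0a (Ne.symm hu0c)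
      have Ac1 : G.Adj c u1 := adjT 1 c hc1 u1 hu1a (Ne.symm hu1c)
      have Ac2 : G.Adj c u2 := adjT 2 c hc2 u2 hu2a (Ne.symm hu2c)
      have Ac3 : G.Adj c u3 := adjT 3 c hc3 u3 hu3a (Ne.symm hu3c)
      have A01 : G.Adj u0 u1 := adjT 1 u0 hu0b u1 hu1a d01
      have A12 : G.Adj u1 u2 := adjT 2 u1 hu1b u2 hu2a d12
      have A23 : G.Adj u2 u3 := adjT 3 u2 hu2b u3 hu3a d23
      have A30 : G.Adj u3 u0 := adjT 0 u3 hu3b u0 hu0a d30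
      -- build the homomorphism
      have key : ∀ x y : Option (Fin 4), x ≠ y →
          (x = none ∨ ∃ p q, x = some p ∧ y = some q ∧ (cycleGraph 4).Adj p q) →
          G.Adj (wheelMap c u0 u1 u2 u3 x) (wheelMap c u0 u1 u2 u3 y) := by
        rintro x y hxy (rfl | ⟨p, q, rfl, rfl, hpq⟩)
        · rcases y with _ | i
          · exact absurd rfl hxy
          · fin_cases i <;>
              first | exact Ac0 | exact Ac1 | exact Ac2 | exact Ac3
        · fin_cases p <;> fin_cases q <;>
            first
              | exact absurd hpq (by decide)
              | exact A01 | exact A01.symm | exact A12 | exact A12.symm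
              | exact A23 | exact A23.symm | exact A30 | exact A30.symm
      refine ⟨⟨wheelMap c u0 u1 u2 u3, ?_⟩, ?_⟩
      · intro a b hab
        simp only [wheel, SimpleGraph.fromRel_adj] at hab
        obtain ⟨hne', h | h⟩ := hab
        · exact key a b hne' h
        · exact (key b a (Ne.symm hne') h).symm
      · intro x y hEq
        rcases x with _ | i <;> rcases y with _ | j
        · rfl
        · exfalso
          fin_cases j <;>
            first
              | exact hu0c hEq.symm | exact hu1c hEq.symm | exact hu2c hEq.symm
              | exact hu3c hEq.symm
        · exfalso
          fin_cases i <;>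
            first | exact hu0c hEq | exact hu1c hEq | exact hu2c hEq | exact hu3c hEq
        · fin_cases i <;> fin_cases j <;>
            first
              | rfl
              | exact absurd hEq d01 | exact absurd hEq.symm d01
              | exact absurd hEq d12 | exact absurd hEq.symm d12
              | exact absurd hEq d23 | exact absurd hEq.symm d23
              | exact absurd hEq d30 | exact absurd hEq.symm d30
              | exact absurd hEq d02 | exact absurd hEq.symm d02
              | exact absurd hEq d13 | exact absurd hEq.symm d13
  · -- backward direction
      intro h
      obtain ⟨f, hf⟩ := h
      have hg : Function.Injective (fun k => f (fin5ToW k)) :=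
        hf.comp (by decide : Function.Injective fin5ToW)
      set ge : Fin 5 ↪ V := ⟨fun k => f (fin5ToW k), hg⟩ with hge
      set t : Fin 4 → Finset V := fun i => Finset.map ge (sIdx i) with ht
      have hW : ∀ i : Fin 4, ∀ a ∈ sIdx i, ∀ b ∈ sIdx i, a ≠ b →
          (wheel 4).Adj (fin5ToW a) (fin5ToW b) := by decide
      have htri : ∀ i, IsTriangle G (t i) := by
        intro i
        constructor
        · rw [ht]; simp only [Finset.card_map]
          revert i; decide
        · intro x hx y hy hxy
          rw [ht] at hx hy
          simp only [Finset.mem_map] at hx hy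
          obtain ⟨a, ha, rfl⟩ := hx
          obtain ⟨b, hb, rfl⟩ := hy
          have hab : a ≠ b := fun h => hxy (by rw [h])
          exact f.map_adj (hW i a ha b hb hab)
      have hsne : ∀ i j : Fin 4, sIdx i = sIdx j → i = j := by decide
      refine ⟨⟨⟨fun i => ⟨t i, htri i⟩, ?_⟩, ?_⟩⟩
      · intro i j hEq
        apply hsne
        apply Finset.map_injective ge
        exact congrArg Subtype.val hEq
      · intro i j
        show (triangleGraph G).Adj ⟨t i, htri i⟩ ⟨t j, htri j⟩ ↔ (cycleGraph 4).Adj i j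
        have hAdj : (triangleGraph G).Adj ⟨t i, htri i⟩ ⟨t j, htri j⟩ ↔
            (t i ≠ t j ∧ ((t i) ∩ (t j)).card = 2) := by
          constructor
          · rintro ⟨h1, h2⟩; exact ⟨fun h => h1 (Subtype.ext h), h2⟩
          · rintro ⟨h1, h2⟩; exact ⟨fun h => h1 (congrArg Subtype.val h), h2⟩
        rw [hAdj]
        have hcap : ((t i) ∩ (t j)).card = (sIdx i ∩ sIdx j).card := by
          rw [ht]; simp only [← Finset.map_inter, Finset.card_map]
        have hne : t i ≠ t j ↔ i ≠ j := by
          constructor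
          · intro h hij; exact h (by rw [hij])
          · intro h hEq; exact h (hsne i j (Finset.map_injective ge hEq))
        rw [hcap, hne]
        have : ∀ i j : Fin 4, (i ≠ j ∧ (sIdx i ∩ sIdx j).card = 2) ↔ (cycleGraph 4).Adj i j := by
          decide
        exact this i j
end

section
/- If the triangle graph T(G) of a finite graph G is a perfect graph, then τ_Δ(G) ≤ 2·ν_Δ(G), where ν_Δ(G) is the maximum number of pairwise edge-disjoint triangles in G and τ_Δ(G) is the minimum size of an edge set meeting every triangle of G. -/
open SimpleGraph

/-- A graph is perfect if every induced subgraph has chromatic number equal to its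
clique number. -/
def IsPerfect {α : Type*} (H : SimpleGraph α) : Prop :=
  ∀ s : Set α, (H.induce s).chromaticNumber = ((H.induce s).cliqueNum : ℕ∞)

/-- `ν_Δ(G)`: the maximum number of pairwise edge-disjoint triangles in `G`. -/
noncomputable def triPackingNumber {V : Type*} [DecidableEq V] (G : SimpleGraph V) : ℕ :=
  sSup {k : ℕ | ∃ S : Finset (Finset V), S.card = k ∧ (∀ t ∈ S, IsTriangle G t) ∧
    ∀ t ∈ S, ∀ s ∈ S, t ≠ s → (t ∩ s).card ≤ 1}

/-- `τ_Δ(G)`: the minimum size of an edge set meeting every triangle of `G`. -/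
noncomputable def triTransversalNumber {V : Type*} [DecidableEq V] (G : SimpleGraph V) : ℕ :=
  sInf {k : ℕ | ∃ E' : Finset (Sym2 V), E'.card = k ∧ (∀ e ∈ E', e ∈ G.edgeSet) ∧
    ∀ t : Finset V, IsTriangle G t → ∃ e ∈ E', ∀ x ∈ e, x ∈ t}


section TuzaAux

open Finset

variable {α : Type*} [Fintype α] [DecidableEq α]

/-- clique as a finset predicate -/
def CliqueF (H : SimpleGraph α) (Q : Finset α) : Prop :=
  ∀ a ∈ Q, ∀ b ∈ Q, a ≠ b → H.Adj a b

/-- independent set as a finset predicate -/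
def IndepF (H : SimpleGraph α) (A : Finset α) : Prop :=
  ∀ a ∈ A, ∀ b ∈ A, a ≠ b → ¬ H.Adj a b

/-- blown-up graph with multiplicities -/
def Hw (H : SimpleGraph α) (w : α → ℕ) : SimpleGraph (Σ v : α, Fin (w v)) where
  Adj x y := x ≠ y ∧ (x.1 = y.1 ∨ H.Adj x.1 y.1)
  symm := ⟨by
    rintro x y ⟨h1, h2⟩
    exact ⟨h1.symm, h2.elim (fun h => Or.inl h.symm) (fun h => Or.inr h.symm)⟩⟩
  loopless := ⟨fun x h => h.1 rfl⟩

open scoped Classical in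
/-- weighted clique number -/
noncomputable def cw (H : SimpleGraph α) (w : α → ℕ) : ℕ :=
  Finset.univ.powerset.sup (fun Q => if CliqueF H Q then Q.sum w else 0)

lemma le_cw {H : SimpleGraph α} {w : α → ℕ} {Q : Finset α} (hQ : CliqueF H Q) :
    Q.sum w ≤ cw H w := by
  classical
  have := Finset.le_sup (f := fun Q => if CliqueF H Q then Q.sum w else 0)
    (Finset.mem_powerset.2 (Finset.subset_univ Q))
  rw [cw]
  simpa only [if_pos hQ] using this

lemma cw_le {H : SimpleGraph α} {w : α → ℕ} {m : ℕ}
    (h : ∀ Q : Finset α, CliqueF H Q → Q.sum w ≤ m) : cw H w ≤ m := by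
  classical
  rw [cw]
  apply Finset.sup_le
  intro Q _
  split_ifs with hQ
  · exact h Q hQ
  · exact Nat.zero_le m

open scoped Classical in
/-- independence number of `H` restricted to `U` -/
noncomputable def aN (H : SimpleGraph α) (U : Finset α) : ℕ :=
  U.powerset.sup (fun A => if IndepF H A then A.card else 0)

lemma le_aN {H : SimpleGraph α} {U A : Finset α} (hA : A ⊆ U) (hI : IndepF H A) :
    A.card ≤ aN H U := by
  classical
  have := Finset.le_sup (f := fun A => if IndepF H A then A.card else 0)
    (Finset.mem_powerset.2 hA)
  rw [aN]
  simpa only [if_pos hI] using this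

lemma aN_le {H : SimpleGraph α} {U : Finset α} {m : ℕ}
    (h : ∀ A : Finset α, A ⊆ U → IndepF H A → A.card ≤ m) : aN H U ≤ m := by
  classical
  rw [aN]
  apply Finset.sup_le
  intro A hA
  split_ifs with hI
  · exact h A (Finset.mem_powerset.1 hA) hI
  · exact Nat.zero_le m

lemma exists_max_indep (H : SimpleGraph α) (U : Finset α) :
    ∃ A : Finset α, A ⊆ U ∧ IndepF H A ∧ A.card = aN H U := by
  classical
  obtain ⟨A, hA, hEq⟩ := Finset.exists_mem_eq_sup U.powerset
    ⟨∅, Finset.empty_mem_powerset U⟩ (fun A => if IndepF H A then A.card else 0)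
  by_cases hI : IndepF H A
  · exact ⟨A, Finset.mem_powerset.1 hA, hI, by rw [aN, hEq, if_pos hI]⟩
  · refine ⟨∅, Finset.empty_subset U, fun a ha => absurd ha (Finset.notMem_empty a), ?_⟩
    rw [aN, hEq, if_neg hI, Finset.card_empty]

lemma sigma_fin_eq {w : α → ℕ} {x y : Σ v : α, Fin (w v)} (h1 : x.1 = y.1)
    (h2 : x.2.val = y.2.val) : x = y := by
  rcases x with ⟨a, i⟩
  rcases y with ⟨b, j⟩
  dsimp at h1 h2
  subst h1
  rw [Fin.ext h2]

/-- the base case of the weighted coloring theorem -/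
lemma wc_base (H : SimpleGraph α) (hperf : IsPerfect H) (w : α → ℕ)
    (hw : ∀ v, w v ≤ 1) : (Hw H w).Colorable (cw H w) := by
  classical
  set s : Set α := {v | 0 < w v} with hs
  have hcol : (H.induce s).Colorable (H.induce s).cliqueNum := by
    rw [← SimpleGraph.chromaticNumber_le_iff_colorable]
    exact le_of_eq (hperf s)
  have hmemsub : ∀ x : Σ v : α, Fin (w v), x.1 ∈ s := by
    intro x
    exact lt_of_le_of_lt (Nat.zero_le _) x.2.isLt
  have hle : (H.induce s).cliqueNum ≤ cw H w := by
    rw [show (H.induce s).cliqueNum = sSup {n | ∃ t, (H.induce s).IsNClique n t} from rfl]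
    refine csSup_le ⟨0, ⟨∅, SimpleGraph.isNClique_empty.mpr rfl⟩⟩ ?_
    rintro n ⟨t, ht⟩
    have hclique : CliqueF H (t.image Subtype.val) := by
      intro a ha b hb hab
      obtain ⟨a', ha', rfl⟩ := Finset.mem_image.1 ha
      obtain ⟨b', hb', rfl⟩ := Finset.mem_image.1 hb
      have hab' : a' ≠ b' := fun h => hab (congrArg Subtype.val h)
      exact ht.1 (Finset.mem_coe.2 ha') (Finset.mem_coe.2 hb') hab'
    have hcard : (t.image Subtype.val).card = n := by
      rw [Finset.card_image_of_injective _ Subtype.val_injective, ht.2]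
    have hsum : (t.image Subtype.val).sum w = n := by
      rw [← hcard, Finset.card_eq_sum_ones]
      apply Finset.sum_congr rfl
      intro v hv
      obtain ⟨a', _, rfl⟩ := Finset.mem_image.1 hv
      have h1 : 0 < w a'.1 := a'.2
      have h2 := hw a'.1
      omega
    calc n = (t.image Subtype.val).sum w := hsum.symm
    _ ≤ cw H w := le_cw hclique
  obtain ⟨C⟩ := hcol
  rw [SimpleGraph.colorable_iff_exists_bdd_nat_coloring]
  refine ⟨SimpleGraph.Coloring.mk (fun x => (C ⟨x.1, hmemsub x⟩).val) ?_, ?_⟩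
  · rintro x y ⟨hne, hor⟩
    rcases hor with heq | hadj
    · exfalso
      apply hne
      apply sigma_fin_eq heq
      have h1 : x.2.val < w x.1 := x.2.isLt
      have h2 : y.2.val < w y.1 := y.2.isLt
      have := hw x.1
      have := hw y.1
      omega
    · intro hc
      have hadj' : (H.induce s).Adj ⟨x.1, hmemsub x⟩ ⟨y.1, hmemsub y⟩ := hadj
      exact C.valid hadj' (Fin.ext hc)
  · intro x
    exact lt_of_lt_of_le (C ⟨x.1, hmemsub x⟩).isLt hle

/-- the weighted coloring theorem for perfect graphs -/
theorem weighted_coloring (H : SimpleGraph α) (hperf : IsPerfect H) :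
    ∀ (n : ℕ) (w : α → ℕ), (∑ v, w v) ≤ n → (Hw H w).Colorable (cw H w) := by
  classical
  intro n
  induction n with
  | zero =>
    intro w hsum
    apply wc_base H hperf
    intro v
    have := Finset.single_le_sum (f := w) (fun i _ => Nat.zero_le _) (Finset.mem_univ v)
    omega
  | succ n ih =>
    intro w hsum
    by_cases hsmall : ∀ v, w v ≤ 1
    · exact wc_base H hperf w hsmall
    push_neg at hsmall
    obtain ⟨v₀, hv₀'⟩ := hsmall
    have hv₀ : 2 ≤ w v₀ := hv₀'
    set w' := Function.update w v₀ (w v₀ - 1) with hw'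
    have hw'v₀ : w' v₀ = w v₀ - 1 := Function.update_self _ _ _
    have hw'ne : ∀ u, u ≠ v₀ → w' u = w u := fun u hu => Function.update_of_ne hu _ _
    have hw'le : ∀ u, w' u ≤ w u := by
      intro u
      by_cases h : u = v₀
      · subst h; rw [hw'v₀]; omega
      · rw [hw'ne u h]
    have hsum' : ∑ v, w' v ≤ n := by
      have h1 := (Finset.add_sum_erase Finset.univ w (Finset.mem_univ v₀)).symm
      have h2 := (Finset.add_sum_erase Finset.univ w' (Finset.mem_univ v₀)).symm
      have h3 : ∑ v ∈ Finset.univ.erase v₀, w' v = ∑ v ∈ Finset.univ.erase v₀, w v :=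
        Finset.sum_congr rfl (fun u hu => hw'ne u (Finset.ne_of_mem_erase hu))
      omega
    set k' := cw H w' with hk'
    set k := cw H w with hk
    have hQsum_mem : ∀ Q : Finset α, v₀ ∈ Q → Q.sum w = Q.sum w' + 1 := by
      intro Q hvQ
      show ∑ x ∈ Q, w x = (∑ x ∈ Q, w' x) + 1
      have h1 := (Finset.add_sum_erase Q w hvQ).symm
      have h2 := (Finset.add_sum_erase Q w' hvQ).symm
      have h3 : ∑ v ∈ Q.erase v₀, w' v = ∑ v ∈ Q.erase v₀, w v :=
        Finset.sum_congr rfl (fun u hu => hw'ne u (Finset.ne_of_mem_erase hu))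
      omega
    have hQsum_not : ∀ Q : Finset α, v₀ ∉ Q → Q.sum w = Q.sum w' :=
      fun Q h => Finset.sum_congr rfl (fun u hu => (hw'ne u (fun he => h (he ▸ hu))).symm)
    have hk'k : k' ≤ k :=
      cw_le (fun Q hQ => le_trans (Finset.sum_le_sum (fun u _ => hw'le u)) (le_cw hQ))
    have hkk' : k ≤ k' + 1 := by
      apply cw_le
      intro Q hQ
      by_cases hvQ : v₀ ∈ Q
      · rw [hQsum_mem Q hvQ]
        exact Nat.add_le_add_right (le_cw hQ) 1
      · rw [hQsum_not Q hvQ]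
        exact le_trans (le_cw hQ) (Nat.le_succ _)
    obtain ⟨C'⟩ := ih w' hsum'
    have htr : ∀ x : Σ v : α, Fin (w v), ¬(x.1 = v₀ ∧ x.2.val = w v₀ - 1) →
        x.2.val < w' x.1 := by
      intro x hx
      by_cases h1 : x.1 = v₀
      · have hr : w' x.1 = w x.1 - 1 := by
          rw [h1, hw'v₀, ← h1]
        have h2 : x.2.val < w x.1 := x.2.isLt
        have h3 : x.2.val ≠ w v₀ - 1 := fun hc => hx ⟨h1, hc⟩
        have h4 : w x.1 = w v₀ := by rw [h1]
        omega
      · rw [hw'ne _ h1]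
        exact x.2.isLt
    rcases (by omega : k = k' + 1 ∨ k = k') with hcase | hcase
    · -- Case A : add a fresh color to the coloring of w'
      rw [SimpleGraph.colorable_iff_exists_bdd_nat_coloring]
      refine ⟨SimpleGraph.Coloring.mk (fun x =>
        if hx : x.1 = v₀ ∧ x.2.val = w v₀ - 1 then k'
        else (C' ⟨x.1, ⟨x.2.val, htr x hx⟩⟩).val) ?_, ?_⟩
      · rintro x y ⟨hne, hor⟩ hc
        by_cases hx : x.1 = v₀ ∧ x.2.val = w v₀ - 1 <;>
          by_cases hy : y.1 = v₀ ∧ y.2.val = w v₀ - 1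
        · exact hne (sigma_fin_eq (hx.1.trans hy.1.symm) (hx.2.trans hy.2.symm))
        · rw [dif_pos hx, dif_neg hy] at hc
          have := (C' ⟨y.1, ⟨y.2.val, htr y hy⟩⟩).isLt
          omega
        · rw [dif_neg hx, dif_pos hy] at hc
          have := (C' ⟨x.1, ⟨x.2.val, htr x hx⟩⟩).isLt
          omega
        · rw [dif_neg hx, dif_neg hy] at hc
          have hadj' : (Hw H w').Adj ⟨x.1, ⟨x.2.val, htr x hx⟩⟩ ⟨y.1, ⟨y.2.val, htr y hy⟩⟩ := by
            refine ⟨fun he => ?_, hor⟩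
            have h1 := congrArg Sigma.fst he
            have h2 := congrArg (fun z : Σ v : α, Fin (w' v) => z.2.val) he
            exact hne (sigma_fin_eq h1 h2)
          exact C'.valid hadj' (Fin.ext hc)
      · intro x
        show (if hx : x.1 = v₀ ∧ x.2.val = w v₀ - 1 then k'
          else (C' ⟨x.1, ⟨x.2.val, htr x hx⟩⟩).val) < k
        by_cases hx : x.1 = v₀ ∧ x.2.val = w v₀ - 1
        · rw [dif_pos hx]; omega
        · rw [dif_neg hx]
          have := (C' ⟨x.1, ⟨x.2.val, htr x hx⟩⟩).isLt
          omega
    · -- Case B : reuse a color class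
      have hk'1 : 1 ≤ k' := by
        have h1 : CliqueF H {v₀} := fun a ha b hb hab =>
          absurd ((Finset.mem_singleton.1 ha).trans (Finset.mem_singleton.1 hb).symm) hab
        have h2 := le_cw (w := w) h1
        rw [Finset.sum_singleton] at h2
        omega
      have h0 : 0 < w' v₀ := by rw [hw'v₀]; omega
      set s0 : Fin k' := C' ⟨v₀, ⟨0, h0⟩⟩ with hs0
      set P : ∀ u : α, Fin (w' u) → Prop := fun u i => C' ⟨u, i⟩ ≠ s0 ∨ u = v₀ with hP
      set w'' : α → ℕ := fun u => (Finset.univ.filter (fun i : Fin (w' u) => P u i)).card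
        with hw''
      have hdef : ∀ u, (Finset.univ.filter (fun i : Fin (w' u) => P u i)).card = w'' u :=
        fun u => by rw [hw'']
      have eqv : ∀ u, Fin (w'' u) ≃o
          {i : Fin (w' u) // i ∈ Finset.univ.filter (fun i : Fin (w' u) => P u i)} :=
        fun u => Finset.orderIsoOfFin _ (hdef u)
      have hw''le : ∀ u, w'' u ≤ w' u := by
        intro u
        rw [← hdef u]
        exact le_trans (Finset.card_filter_le _ _) (by simp)
      have hsum'' : ∑ v, w'' v ≤ n :=
        le_trans (Finset.sum_le_sum (fun u _ => hw''le u)) hsum'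
      have hcw'' : cw H w'' ≤ k' - 1 := by
        apply cw_le
        intro Q hQc
        by_cases hends : Q.sum w' ≤ k' - 1
        · exact le_trans (Finset.sum_le_sum (fun u _ => hw''le u)) hends
        have hQk' : Q.sum w' = k' := by
          have := le_cw (w := w') hQc
          omega
        have hv₀Q : v₀ ∉ Q := by
          intro hvQ
          have h1 : Q.sum w = Q.sum w' + 1 := hQsum_mem Q hvQ
          have h2 := le_cw (w := w) hQc
          omega
        set K : Finset (Σ v : α, Fin (w' v)) := Q.sigma (fun u => Finset.univ) with hK
        have hKcard : K.card = k' := by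
          rw [hK, Finset.card_sigma]
          rw [← hQk']
          exact Finset.sum_congr rfl (fun u _ => by simp)
        have hKinj : Set.InjOn (fun x => C' x) K := by
          intro x hx y hy hxy
          by_contra hne
          have hxQ : x.1 ∈ Q := (Finset.mem_sigma.1 (Finset.mem_coe.1 hx)).1
          have hyQ : y.1 ∈ Q := (Finset.mem_sigma.1 (Finset.mem_coe.1 hy)).1
          have hadj : (Hw H w').Adj x y := by
            refine ⟨hne, ?_⟩
            by_cases hb : x.1 = y.1
            · exact Or.inl hb
            · exact Or.inr (hQc _ hxQ _ hyQ hb)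
          exact C'.valid hadj hxy
        have himg : (K.image (fun x => C' x)).card = k' := by
          rw [Finset.card_image_of_injOn hKinj, hKcard]
        have himgu : K.image (fun x => C' x) = Finset.univ :=
          Finset.eq_univ_of_card _ (by rw [himg, Fintype.card_fin])
        have hs0mem : s0 ∈ K.image (fun x => C' x) := himgu ▸ Finset.mem_univ s0
        obtain ⟨x0, hx0K, hx0c⟩ := Finset.mem_image.1 hs0mem
        have hx0Q : x0.1 ∈ Q := (Finset.mem_sigma.1 hx0K).1
        have hx0v₀ : x0.1 ≠ v₀ := fun h => hv₀Q (h ▸ hx0Q)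
        have hdrop : w'' x0.1 + 1 ≤ w' x0.1 := by
          have hnotP : ¬ P x0.1 x0.2 := by
            intro hp
            rcases hp with h | h
            · apply h
              rw [Sigma.eta]
              exact hx0c
            · exact hx0v₀ h
          have hsub : Finset.univ.filter (fun i : Fin (w' x0.1) => P x0.1 i) ⊆
              Finset.univ.erase x0.2 := by
            intro i hi
            refine Finset.mem_erase.2 ⟨?_, Finset.mem_univ _⟩
            intro he
            apply hnotP
            rw [← he]
            exact (Finset.mem_filter.1 hi).2
          have h1 := Finset.card_le_card hsub
          have h2 : (Finset.univ.erase x0.2).card = w' x0.1 - 1 := by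
            rw [Finset.card_erase_of_mem (Finset.mem_univ _)]
            simp
          have h3 : 0 < w' x0.1 := lt_of_le_of_lt (Nat.zero_le _) x0.2.isLt
          rw [hdef x0.1] at h1
          omega
        have e1 := (Finset.add_sum_erase Q w'' hx0Q).symm
        have e2 := (Finset.add_sum_erase Q w' hx0Q).symm
        have e3 : ∑ u ∈ Q.erase x0.1, w'' u ≤ ∑ u ∈ Q.erase x0.1, w' u :=
          Finset.sum_le_sum (fun u _ => hw''le u)
        have hQk2 : ∑ x ∈ Q, w' x = k' := hQk'
        show (∑ x ∈ Q, w'' x) ≤ k' - 1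
        omega
      obtain ⟨C''⟩ := ih w'' hsum''
      rw [SimpleGraph.colorable_iff_exists_bdd_nat_coloring]
      refine ⟨SimpleGraph.Coloring.mk (fun x =>
        if hx : x.1 = v₀ ∧ x.2.val = w v₀ - 1 then k' - 1
        else if hp : P x.1 ⟨x.2.val, htr x hx⟩ then
          (C'' ⟨x.1, (eqv x.1).symm ⟨⟨x.2.val, htr x hx⟩,
            Finset.mem_filter.2 ⟨Finset.mem_univ _, hp⟩⟩⟩).val
        else k' - 1) ?_, ?_⟩
      · rintro x y ⟨hne, hor⟩ hc
        have hC''lt : ∀ z, (C'' z).val < k' - 1 :=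
          fun z => lt_of_lt_of_le (C'' z).isLt hcw''
        by_cases hx : x.1 = v₀ ∧ x.2.val = w v₀ - 1 <;>
          by_cases hy : y.1 = v₀ ∧ y.2.val = w v₀ - 1
        · exact hne (sigma_fin_eq (hx.1.trans hy.1.symm) (hx.2.trans hy.2.symm))
        · -- x top copy of v₀, y not
          rw [dif_pos hx, dif_neg hy] at hc
          by_cases hp : P y.1 ⟨y.2.val, htr y hy⟩
          · rw [dif_pos hp] at hc
            have := hC''lt ⟨y.1, (eqv y.1).symm ⟨⟨y.2.val, htr y hy⟩,
              Finset.mem_filter.2 ⟨Finset.mem_univ _, hp⟩⟩⟩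
            omega
          · -- y is in the color class of s0 ; y.1 ≠ v₀ and adjacent to v₀
            have hys0 : C' ⟨y.1, ⟨y.2.val, htr y hy⟩⟩ = s0 := by
              by_contra hcon
              exact hp (Or.inl hcon)
            have hyv₀ : y.1 ≠ v₀ := fun h => hp (Or.inr h)
            rcases hor with hb | hadjH
            · exact hyv₀ (hb ▸ hx.1 : y.1 = v₀)
            · have hadj' : (Hw H w').Adj ⟨v₀, ⟨0, h0⟩⟩ ⟨y.1, ⟨y.2.val, htr y hy⟩⟩ := by
                refine ⟨?_, Or.inr ?_⟩
                · intro he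
                  exact hyv₀ (congrArg Sigma.fst he).symm
                · show H.Adj v₀ y.1
                  rw [← hx.1]
                  exact hadjH
              exact C'.valid hadj' (hs0 ▸ hys0.symm ▸ rfl)
        · -- y top copy of v₀, x not
          rw [dif_neg hx, dif_pos hy] at hc
          by_cases hp : P x.1 ⟨x.2.val, htr x hx⟩
          · rw [dif_pos hp] at hc
            have := hC''lt ⟨x.1, (eqv x.1).symm ⟨⟨x.2.val, htr x hx⟩,
              Finset.mem_filter.2 ⟨Finset.mem_univ _, hp⟩⟩⟩
            omega
          · have hxs0 : C' ⟨x.1, ⟨x.2.val, htr x hx⟩⟩ = s0 := by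
              by_contra hcon
              exact hp (Or.inl hcon)
            have hxv₀ : x.1 ≠ v₀ := fun h => hp (Or.inr h)
            rcases hor with hb | hadjH
            · exact hxv₀ (hb.symm ▸ hy.1 : x.1 = v₀)
            · have hadj' : (Hw H w').Adj ⟨v₀, ⟨0, h0⟩⟩ ⟨x.1, ⟨x.2.val, htr x hx⟩⟩ := by
                refine ⟨?_, Or.inr ?_⟩
                · intro he
                  exact hxv₀ (congrArg Sigma.fst he).symm
                · show H.Adj v₀ x.1
                  rw [← hy.1]
                  exact hadjH.symm
              exact C'.valid hadj' (hs0 ▸ hxs0.symm ▸ rfl)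
        · -- neither is the top copy
          rw [dif_neg hx, dif_neg hy] at hc
          by_cases hpx : P x.1 ⟨x.2.val, htr x hx⟩ <;>
            by_cases hpy : P y.1 ⟨y.2.val, htr y hy⟩
          · -- both kept : use C''
            rw [dif_pos hpx, dif_pos hpy] at hc
            obtain ⟨xu, xi⟩ := x
            obtain ⟨yu, yi⟩ := y
            by_cases hb : xu = yu
            · subst hb
              have hvne : xi.val ≠ yi.val := by
                intro hvv
                exact hne (sigma_fin_eq rfl hvv)
              have hjne : (eqv xu).symm ⟨⟨xi.val, htr ⟨xu, xi⟩ hx⟩,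
                    Finset.mem_filter.2 ⟨Finset.mem_univ _, hpx⟩⟩ ≠
                  (eqv xu).symm ⟨⟨yi.val, htr ⟨xu, yi⟩ hy⟩,
                    Finset.mem_filter.2 ⟨Finset.mem_univ _, hpy⟩⟩ := by
                intro he
                have := (eqv xu).symm.injective he
                have hval := congrArg (fun z => z.val.val) this
                exact hvne hval
              have hadj'' : (Hw H w'').Adj
                  ⟨xu, (eqv xu).symm ⟨⟨xi.val, htr ⟨xu, xi⟩ hx⟩,
                    Finset.mem_filter.2 ⟨Finset.mem_univ _, hpx⟩⟩⟩
                  ⟨xu, (eqv xu).symm ⟨⟨yi.val, htr ⟨xu, yi⟩ hy⟩,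
                    Finset.mem_filter.2 ⟨Finset.mem_univ _, hpy⟩⟩⟩ := by
                refine ⟨?_, Or.inl rfl⟩
                intro he
                apply hjne
                have hval := congrArg (fun z : Σ u : α, Fin (w'' u) => z.2.val) he
                exact Fin.ext hval
              exact C''.valid hadj'' (Fin.ext hc)
            · have hadjH : H.Adj xu yu := by
                rcases hor with h | h
                · exact absurd h hb
                · exact h
              have hadj'' : (Hw H w'').Adj
                  ⟨xu, (eqv xu).symm ⟨⟨xi.val, htr ⟨xu, xi⟩ hx⟩,
                    Finset.mem_filter.2 ⟨Finset.mem_univ _, hpx⟩⟩⟩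
                  ⟨yu, (eqv yu).symm ⟨⟨yi.val, htr ⟨yu, yi⟩ hy⟩,
                    Finset.mem_filter.2 ⟨Finset.mem_univ _, hpy⟩⟩⟩ := by
                refine ⟨?_, Or.inr hadjH⟩
                intro he
                exact hb (congrArg Sigma.fst he)
              exact C''.valid hadj'' (Fin.ext hc)
          · -- x kept, y in class of s0
            rw [dif_pos hpx, dif_neg hpy] at hc
            have := hC''lt ⟨x.1, (eqv x.1).symm ⟨⟨x.2.val, htr x hx⟩,
              Finset.mem_filter.2 ⟨Finset.mem_univ _, hpx⟩⟩⟩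
            omega
          · rw [dif_neg hpx, dif_pos hpy] at hc
            have := hC''lt ⟨y.1, (eqv y.1).symm ⟨⟨y.2.val, htr y hy⟩,
              Finset.mem_filter.2 ⟨Finset.mem_univ _, hpy⟩⟩⟩
            omega
          · -- both in class of s0
            have hxs0 : C' ⟨x.1, ⟨x.2.val, htr x hx⟩⟩ = s0 := by
              by_contra hcon
              exact hpx (Or.inl hcon)
            have hys0 : C' ⟨y.1, ⟨y.2.val, htr y hy⟩⟩ = s0 := by
              by_contra hcon
              exact hpy (Or.inl hcon)
            have hadj' : (Hw H w').Adj ⟨x.1, ⟨x.2.val, htr x hx⟩⟩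
                ⟨y.1, ⟨y.2.val, htr y hy⟩⟩ := by
              refine ⟨?_, hor⟩
              intro he
              have h1 := congrArg Sigma.fst he
              have h2 := congrArg (fun z : Σ v : α, Fin (w' v) => z.2.val) he
              exact hne (sigma_fin_eq h1 h2)
            exact C'.valid hadj' (hxs0.trans hys0.symm)
      · intro x
        show (if hx : x.1 = v₀ ∧ x.2.val = w v₀ - 1 then k' - 1
          else if hp : P x.1 ⟨x.2.val, htr x hx⟩ then
            (C'' ⟨x.1, (eqv x.1).symm ⟨⟨x.2.val, htr x hx⟩,
              Finset.mem_filter.2 ⟨Finset.mem_univ _, hp⟩⟩⟩).val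
          else k' - 1) < k
        by_cases hx : x.1 = v₀ ∧ x.2.val = w v₀ - 1
        · rw [dif_pos hx]
          omega
        · rw [dif_neg hx]
          by_cases hp : P x.1 ⟨x.2.val, htr x hx⟩
          · rw [dif_pos hp]
            have := lt_of_lt_of_le (C'' ⟨x.1, (eqv x.1).symm ⟨⟨x.2.val, htr x hx⟩,
              Finset.mem_filter.2 ⟨Finset.mem_univ _, hp⟩⟩⟩).isLt hcw''
            omega
          · rw [dif_neg hp]
            omega

/-- clique cover theorem for perfect graphs -/
theorem clique_cover (H : SimpleGraph α) (hperf : IsPerfect H) (U : Finset α) :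
    ∃ F : Finset (Finset α), F.card ≤ aN H U ∧ (∀ Q ∈ F, CliqueF H Q) ∧
      ∀ v ∈ U, ∃ Q ∈ F, v ∈ Q := by
  classical
  induction U using Finset.strongInduction with
  | _ U ih => ?_
  by_cases hU : U = ∅
  · exact ⟨∅, by simp, by simp, by simp [hU]⟩
  have hUne : U.Nonempty := Finset.nonempty_of_ne_empty hU
  have haU1 : 1 ≤ aN H U := by
    obtain ⟨v, hv⟩ := hUne
    have := le_aN (H := H) (Finset.singleton_subset_iff.2 hv)
      (fun a ha b hb hab => absurd ((Finset.mem_singleton.1 ha).trans (Finset.mem_singleton.1 hb).symm) hab)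
    simpa using this
  by_cases hQex : ∃ Q : Finset α, Q ⊆ U ∧ CliqueF H Q ∧
      ∀ A : Finset α, A ⊆ U → IndepF H A → A.card = aN H U → (Q ∩ A).Nonempty
  · -- a clique meeting all maximum independent sets
    obtain ⟨Q, hQU, hQc, hQmeet⟩ := hQex
    have hQne : Q.Nonempty := by
      obtain ⟨A₀, hA₀U, hA₀I, hA₀c⟩ := exists_max_indep H U
      obtain ⟨x, hx⟩ := hQmeet A₀ hA₀U hA₀I hA₀c
      exact ⟨x, (Finset.mem_inter.1 hx).1⟩
    have hss : U \ Q ⊂ U := Finset.sdiff_ssubset hQU hQne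
    obtain ⟨F', hF'card, hF'clique, hF'cover⟩ := ih (U \ Q) hss
    have haU' : aN H (U \ Q) ≤ aN H U - 1 := by
      apply aN_le
      intro A hAU' hAI
      have hAU : A ⊆ U := hAU'.trans (Finset.sdiff_subset)
      have h1 : A.card ≤ aN H U := le_aN hAU hAI
      have h2 : A.card ≠ aN H U := by
        intro hc
        obtain ⟨x, hx⟩ := hQmeet A hAU hAI hc
        have hxQ := (Finset.mem_inter.1 hx).1
        have hxA := (Finset.mem_inter.1 hx).2
        exact (Finset.mem_sdiff.1 (hAU' hxA)).2 hxQ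
      omega
    refine ⟨insert Q F', ?_, ?_, ?_⟩
    · have := Finset.card_insert_le Q F'
      omega
    · intro Q' hQ'
      rcases Finset.mem_insert.1 hQ' with rfl | hQ'
      · exact hQc
      · exact hF'clique Q' hQ'
    · intro v hv
      by_cases hvQ : v ∈ Q
      · exact ⟨Q, Finset.mem_insert_self _ _, hvQ⟩
      · obtain ⟨Q', hQ'F, hvQ'⟩ := hF'cover v (Finset.mem_sdiff.2 ⟨hv, hvQ⟩)
        exact ⟨Q', Finset.mem_insert_of_mem hQ'F, hvQ'⟩
  · -- derive a contradiction via the weighted coloring theorem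
    exfalso
    have h' : ∀ Q : Finset α, Q ⊆ U → CliqueF H Q →
        ∃ A, A ⊆ U ∧ IndepF H A ∧ A.card = aN H U ∧ Q ∩ A = ∅ := by
      intro Q h1 h2
      by_contra hA
      push_neg at hA
      apply hQex
      refine ⟨Q, h1, h2, fun A hAU hAI hAc => ?_⟩
      rcases Finset.eq_empty_or_nonempty (Q ∩ A) with he | hne
      · exact absurd he (Finset.nonempty_iff_ne_empty.1 (hA A hAU hAI hAc))
      · exact hne
    set 𝒦 : Finset (Finset α) := U.powerset.filter (fun Q => CliqueF H Q) with h𝒦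
    set m : ℕ := 𝒦.card with hm
    have hm1 : 1 ≤ m := by
      rw [hm]
      refine Finset.card_pos.2 ⟨∅, Finset.mem_filter.2 ⟨Finset.empty_mem_powerset U, ?_⟩⟩
      intro a ha
      exact absurd ha (Finset.notMem_empty a)
    have hsel : ∀ Q : Finset α, ∃ A, Q ∈ 𝒦 →
        (A ⊆ U ∧ IndepF H A ∧ A.card = aN H U ∧ Q ∩ A = ∅) := by
      intro Q
      by_cases hQ𝒦 : Q ∈ 𝒦
      · obtain ⟨hQU, hQc⟩ := Finset.mem_filter.1 hQ𝒦
        obtain ⟨A, hA⟩ := h' Q (Finset.mem_powerset.1 hQU) hQc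
        exact ⟨A, fun _ => hA⟩
      · exact ⟨∅, fun hc => absurd hc hQ𝒦⟩
    choose A hA using hsel
    set w : α → ℕ := fun v => (𝒦.filter (fun Q => v ∈ A Q)).card with hw
    -- total weight
    have hsum : ∑ v, w v = m * aN H U := by
      have : ∀ v, w v = ∑ Q ∈ 𝒦, if v ∈ A Q then 1 else 0 := by
        intro v
        rw [hw]
        exact Finset.card_filter _ _
      rw [Finset.sum_congr rfl (fun v _ => this v), Finset.sum_comm]
      have hinner : ∀ Q ∈ 𝒦, (∑ v : α, if v ∈ A Q then 1 else 0) = aN H U := by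
        intro Q hQ𝒦
        rw [← Finset.card_filter, Finset.filter_univ_mem, (hA Q hQ𝒦).2.2.1]
      rw [Finset.sum_congr rfl hinner, Finset.sum_const, smul_eq_mul]
    -- weighted clique number bound
    have hcwle : cw H w ≤ m - 1 := by
      apply cw_le
      intro Q' hQ'c
      have hQsum : Q'.sum w = ∑ Q ∈ 𝒦, (Q' ∩ A Q).card := by
        have : ∀ v, w v = ∑ Q ∈ 𝒦, if v ∈ A Q then 1 else 0 := by
          intro v
          rw [hw]
          exact Finset.card_filter _ _
        rw [Finset.sum_congr rfl (fun v _ => this v), Finset.sum_comm]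
        refine Finset.sum_congr rfl (fun Q _ => ?_)
        rw [← Finset.card_filter, Finset.filter_mem_eq_inter]
      set Q₀ : Finset α := Q' ∩ U with hQ₀
      have hQ₀𝒦 : Q₀ ∈ 𝒦 := by
        refine Finset.mem_filter.2 ⟨Finset.mem_powerset.2 Finset.inter_subset_right, ?_⟩
        intro x hx y hy hxy
        exact hQ'c x (Finset.mem_inter.1 hx).1 y (Finset.mem_inter.1 hy).1 hxy
      have hzero : (Q' ∩ A Q₀).card = 0 := by
        rw [Finset.card_eq_zero]
        apply Finset.eq_empty_of_forall_notMem
        intro x hx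
        have hxQ' := (Finset.mem_inter.1 hx).1
        have hxA := (Finset.mem_inter.1 hx).2
        have hxU : x ∈ U := (hA Q₀ hQ₀𝒦).1 hxA
        have hxQ₀ : x ∈ Q₀ := Finset.mem_inter.2 ⟨hxQ', hxU⟩
        have : x ∈ Q₀ ∩ A Q₀ := Finset.mem_inter.2 ⟨hxQ₀, hxA⟩
        rw [(hA Q₀ hQ₀𝒦).2.2.2] at this
        exact absurd this (Finset.notMem_empty x)
      have hone : ∀ Q ∈ 𝒦, (Q' ∩ A Q).card ≤ 1 := by
        intro Q hQ𝒦
        apply Finset.card_le_one.2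
        intro x hx y hy
        by_contra hxy
        have hadj := hQ'c x (Finset.mem_inter.1 hx).1 y (Finset.mem_inter.1 hy).1 hxy
        exact (hA Q hQ𝒦).2.1 x (Finset.mem_inter.1 hx).2 y (Finset.mem_inter.1 hy).2 hxy hadj
      rw [hQsum, ← Finset.add_sum_erase 𝒦 _ hQ₀𝒦, hzero, zero_add]
      calc ∑ Q ∈ 𝒦.erase Q₀, (Q' ∩ A Q).card
          ≤ (𝒦.erase Q₀).card • 1 :=
            Finset.sum_le_card_nsmul _ _ 1 (fun Q hQ => hone Q (Finset.mem_of_mem_erase hQ))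
        _ = m - 1 := by rw [smul_eq_mul, mul_one, Finset.card_erase_of_mem hQ₀𝒦]
    -- the coloring
    obtain ⟨C⟩ := weighted_coloring H hperf (∑ v, w v) w le_rfl
    have hcardV : Fintype.card (Σ v : α, Fin (w v)) = ∑ v, w v := by
      simp [Fintype.card_sigma]
    have hfib : ∀ c : Fin (cw H w),
        (Finset.univ.filter (fun x : Σ v : α, Fin (w v) => C x = c)).card ≤ aN H U := by
      intro c
      set B := Finset.univ.filter (fun x : Σ v : α, Fin (w v) => C x = c) with hB
      have hinj : Set.InjOn (fun x : Σ v : α, Fin (w v) => x.1) B := by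
        intro x hx y hy hxy
        by_contra hne
        have hadj : (Hw H w).Adj x y := ⟨hne, Or.inl hxy⟩
        have := C.valid hadj
        rw [(Finset.mem_filter.1 hx).2, (Finset.mem_filter.1 hy).2] at this
        exact this rfl
      have hcardB : B.card = (B.image (fun x => x.1)).card :=
        (Finset.card_image_of_injOn hinj).symm
      rw [hcardB]
      apply le_aN
      · intro v hv
        obtain ⟨x, hxB, rfl⟩ := Finset.mem_image.1 hv
        have hpos : 0 < w x.1 := lt_of_le_of_lt (Nat.zero_le _) x.2.isLt
        have : (𝒦.filter (fun Q => x.1 ∈ A Q)).Nonempty := Finset.card_pos.1 hpos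
        obtain ⟨Q, hQ⟩ := this
        exact (hA Q (Finset.mem_filter.1 hQ).1).1 (Finset.mem_filter.1 hQ).2
      · intro a ha b hb hab hadj
        obtain ⟨x, hxB, rfl⟩ := Finset.mem_image.1 ha
        obtain ⟨y, hyB, rfl⟩ := Finset.mem_image.1 hb
        have hne : x ≠ y := fun h => hab (congrArg _ h)
        have hadj' : (Hw H w).Adj x y := ⟨hne, Or.inr hadj⟩
        have := C.valid hadj'
        rw [(Finset.mem_filter.1 hxB).2, (Finset.mem_filter.1 hyB).2] at this
        exact this rfl
    have htotal : ∑ v, w v ≤ (cw H w) * aN H U := by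
      have hcount := Finset.card_eq_sum_card_fiberwise
        (f := fun x : Σ v : α, Fin (w v) => C x) (s := Finset.univ) (t := Finset.univ)
        (fun x _ => Finset.mem_univ _)
      rw [← Finset.card_univ] at hcardV
      rw [← hcardV, hcount]
      calc ∑ c ∈ Finset.univ, (Finset.univ.filter (fun x : Σ v : α, Fin (w v) => C x = c)).card
          ≤ (Finset.univ : Finset (Fin (cw H w))).card • aN H U :=
            Finset.sum_le_card_nsmul _ _ _ (fun c _ => hfib c)
        _ = (cw H w) * aN H U := by rw [smul_eq_mul, Finset.card_univ, Fintype.card_fin]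
    rw [hsum] at htotal
    have hle : (cw H w) * aN H U ≤ (m - 1) * aN H U := Nat.mul_le_mul_right _ hcwle
    have : m * aN H U ≤ (m - 1) * aN H U := le_trans htotal hle
    have hmm : m ≤ m - 1 := Nat.le_of_mul_le_mul_right
      (by rwa [Nat.mul_comm m, Nat.mul_comm (m-1)] at this) (by omega)
    omega

end TuzaAux

/-- two edges suffice to cover all triangles in a clique of the triangle graph -/
lemma clique_edge_cover {V : Type*} [DecidableEq V] (G : SimpleGraph V)
    (Q : Finset {t : Finset V // IsTriangle G t}) (hQ : CliqueF (triangleGraph G) Q) :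
    ∃ E : Finset (Sym2 V), E.card ≤ 2 ∧ (∀ e ∈ E, e ∈ G.edgeSet) ∧
      ∀ p ∈ Q, ∃ e ∈ E, ∀ x ∈ e, x ∈ p.val := by
  classical
  by_cases hne : Q.Nonempty
  swap
  · refine ⟨∅, by simp, by simp, fun p hp => ?_⟩
    rw [Finset.not_nonempty_iff_eq_empty.1 hne] at hp
    exact absurd hp (Finset.notMem_empty p)
  by_cases hcom : ∃ u v : V, u ≠ v ∧ ∀ p ∈ Q, u ∈ p.val ∧ v ∈ p.val
  · obtain ⟨u, v, huv, hall⟩ := hcom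
    obtain ⟨p₀, hp₀⟩ := hne
    have hadj : G.Adj u v := p₀.2.2 u (hall p₀ hp₀).1 v (hall p₀ hp₀).2 huv
    refine ⟨{s(u,v)}, by simp, ?_, ?_⟩
    · intro e he
      rw [Finset.mem_singleton] at he
      subst he
      exact hadj
    · intro p hp
      refine ⟨s(u,v), Finset.mem_singleton_self _, fun x hx => ?_⟩
      rw [Sym2.mem_iff] at hx
      rcases hx with rfl | rfl
      exacts [(hall p hp).1, (hall p hp).2]
  · -- two distinct triangles
    have h2 : ∃ p₁ ∈ Q, ∃ p₂ ∈ Q, p₁ ≠ p₂ := by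
      by_contra hc
      push_neg at hc
      obtain ⟨p₀, hp₀⟩ := hne
      have hcard : 1 < p₀.val.card := by rw [p₀.2.1]; omega
      obtain ⟨u, hu, v, hv, huv⟩ := Finset.one_lt_card.1 hcard
      exact hcom ⟨u, v, huv, fun p hp => by
        have := hc p₀ hp₀ p hp
        rw [← this]; exact ⟨hu, hv⟩⟩
    obtain ⟨p₁, hp₁, p₂, hp₂, h12⟩ := h2
    have hadj12 := hQ p₁ hp₁ p₂ hp₂ h12
    have hcard2 : (p₁.val ∩ p₂.val).card = 2 := hadj12.2
    obtain ⟨a, b, hab, hI⟩ := Finset.card_eq_two.1 hcard2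
    have ha1 : a ∈ p₁.val := Finset.inter_subset_left (hI ▸ Finset.mem_insert_self a {b})
    have ha2 : a ∈ p₂.val := Finset.inter_subset_right (hI ▸ Finset.mem_insert_self a {b})
    have hb1 : b ∈ p₁.val := Finset.inter_subset_left
      (hI ▸ Finset.mem_insert_of_mem (Finset.mem_singleton_self b))
    have hb2 : b ∈ p₂.val := Finset.inter_subset_right
      (hI ▸ Finset.mem_insert_of_mem (Finset.mem_singleton_self b))
    -- the third vertices
    have hsd1 : (p₁.val \ (p₁.val ∩ p₂.val)).Nonempty := by
      rw [← Finset.card_pos, Finset.card_sdiff_of_subset Finset.inter_subset_left, hcard2, p₁.2.1]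
      omega
    obtain ⟨cv, hcv⟩ := hsd1
    have hcv1 : cv ∈ p₁.val := (Finset.mem_sdiff.1 hcv).1
    have hcvI : cv ∉ p₁.val ∩ p₂.val := (Finset.mem_sdiff.1 hcv).2
    have hcv2 : cv ∉ p₂.val := fun h => hcvI (Finset.mem_inter.2 ⟨hcv1, h⟩)
    have hsd2 : (p₂.val \ (p₁.val ∩ p₂.val)).Nonempty := by
      rw [← Finset.card_pos, Finset.card_sdiff_of_subset Finset.inter_subset_right, hcard2, p₂.2.1]
      omega
    obtain ⟨dv, hdv⟩ := hsd2
    have hdv2 : dv ∈ p₂.val := (Finset.mem_sdiff.1 hdv).1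
    have hdvI : dv ∉ p₁.val ∩ p₂.val := (Finset.mem_sdiff.1 hdv).2
    have hdv1 : dv ∉ p₁.val := fun h => hdvI (Finset.mem_inter.2 ⟨h, hdv2⟩)
    have hca : cv ≠ a := fun h => hcvI (h ▸ (hI ▸ Finset.mem_insert_self a {b} : a ∈ p₁.val ∩ p₂.val))
    have hcb : cv ≠ b := fun h => hcvI (h ▸ (hI ▸ Finset.mem_insert_of_mem (Finset.mem_singleton_self b) : b ∈ p₁.val ∩ p₂.val))
    have hda : dv ≠ a := fun h => hdvI (h ▸ (hI ▸ Finset.mem_insert_self a {b} : a ∈ p₁.val ∩ p₂.val))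
    have hdb : dv ≠ b := fun h => hdvI (h ▸ (hI ▸ Finset.mem_insert_of_mem (Finset.mem_singleton_self b) : b ∈ p₁.val ∩ p₂.val))
    have hcd : cv ≠ dv := fun h => hdv1 (h ▸ hcv1)
    -- t1 = {a, b, cv}, t2 = {a, b, dv}
    have ht1 : p₁.val = {a, b, cv} := by
      refine (Finset.eq_of_subset_of_card_le ?_ ?_).symm
      · intro x hx
        rcases Finset.mem_insert.1 hx with rfl | hx
        · exact ha1
        rcases Finset.mem_insert.1 hx with rfl | hx
        · exact hb1
        · rw [Finset.mem_singleton.1 hx]; exact hcv1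
      · rw [p₁.2.1]
        rw [Finset.card_insert_of_notMem (by simp [hab, Ne.symm hca]),
          Finset.card_insert_of_notMem (by simp [Ne.symm hcb]), Finset.card_singleton]
    have ht2 : p₂.val = {a, b, dv} := by
      refine (Finset.eq_of_subset_of_card_le ?_ ?_).symm
      · intro x hx
        rcases Finset.mem_insert.1 hx with rfl | hx
        · exact ha2
        rcases Finset.mem_insert.1 hx with rfl | hx
        · exact hb2
        · rw [Finset.mem_singleton.1 hx]; exact hdv2
      · rw [p₂.2.1]
        rw [Finset.card_insert_of_notMem (by simp [hab, Ne.symm hda]),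
          Finset.card_insert_of_notMem (by simp [Ne.symm hdb]), Finset.card_singleton]
    -- key claim: any triangle in Q missing {a,b} contains both cv and dv
    have CL : ∀ p ∈ Q, ¬(a ∈ p.val ∧ b ∈ p.val) → cv ∈ p.val ∧ dv ∈ p.val := by
      intro p hp hnab
      have hpne1 : p ≠ p₁ := fun h => hnab (h ▸ ⟨ha1, hb1⟩)
      have hpne2 : p ≠ p₂ := fun h => hnab (h ▸ ⟨ha2, hb2⟩)
      have hA1 : (p.val ∩ p₁.val).card = 2 := (hQ p hp p₁ hp₁ hpne1).2
      have hA2 : (p.val ∩ p₂.val).card = 2 := (hQ p hp p₂ hp₂ hpne2).2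
      rcases not_and_or.1 hnab with hna | hnb
      · -- a ∉ p : p ∩ t1 = {b, cv}, p ∩ t2 = {b, dv}
        have e1 : p.val ∩ p₁.val = {b, cv} := by
          apply Finset.eq_of_subset_of_card_le
          · intro x hx
            have hxp := (Finset.mem_inter.1 hx).1
            have hxt := (Finset.mem_inter.1 hx).2
            rw [ht1] at hxt
            rcases Finset.mem_insert.1 hxt with rfl | hxt
            · exact absurd hxp hna
            · exact hxt
          · rw [hA1, Finset.card_insert_of_notMem (by simp [hcb.symm]), Finset.card_singleton]
        have e2 : p.val ∩ p₂.val = {b, dv} := by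
          apply Finset.eq_of_subset_of_card_le
          · intro x hx
            have hxp := (Finset.mem_inter.1 hx).1
            have hxt := (Finset.mem_inter.1 hx).2
            rw [ht2] at hxt
            rcases Finset.mem_insert.1 hxt with rfl | hxt
            · exact absurd hxp hna
            · exact hxt
          · rw [hA2, Finset.card_insert_of_notMem (by simp [hdb.symm]), Finset.card_singleton]
        constructor
        · have : cv ∈ p.val ∩ p₁.val := by
            rw [e1]; exact Finset.mem_insert_of_mem (Finset.mem_singleton_self cv)
          exact (Finset.mem_inter.1 this).1
        · have : dv ∈ p.val ∩ p₂.val := by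
            rw [e2]; exact Finset.mem_insert_of_mem (Finset.mem_singleton_self dv)
          exact (Finset.mem_inter.1 this).1
      · -- b ∉ p : p ∩ t1 = {a, cv}, p ∩ t2 = {a, dv}
        have e1 : p.val ∩ p₁.val = {a, cv} := by
          apply Finset.eq_of_subset_of_card_le
          · intro x hx
            have hxp := (Finset.mem_inter.1 hx).1
            have hxt := (Finset.mem_inter.1 hx).2
            rw [ht1] at hxt
            rcases Finset.mem_insert.1 hxt with rfl | hxt
            · exact Finset.mem_insert_self _ _
            rcases Finset.mem_insert.1 hxt with rfl | hxt
            · exact absurd hxp hnb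
            · exact Finset.mem_insert_of_mem hxt
          · rw [hA1, Finset.card_insert_of_notMem (by simp [hca.symm]), Finset.card_singleton]
        have e2 : p.val ∩ p₂.val = {a, dv} := by
          apply Finset.eq_of_subset_of_card_le
          · intro x hx
            have hxp := (Finset.mem_inter.1 hx).1
            have hxt := (Finset.mem_inter.1 hx).2
            rw [ht2] at hxt
            rcases Finset.mem_insert.1 hxt with rfl | hxt
            · exact Finset.mem_insert_self _ _
            rcases Finset.mem_insert.1 hxt with rfl | hxt
            · exact absurd hxp hnb
            · exact Finset.mem_insert_of_mem hxt
          · rw [hA2, Finset.card_insert_of_notMem (by simp [hda.symm]), Finset.card_singleton]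
        constructor
        · have : cv ∈ p.val ∩ p₁.val := by
            rw [e1]; exact Finset.mem_insert_of_mem (Finset.mem_singleton_self cv)
          exact (Finset.mem_inter.1 this).1
        · have : dv ∈ p.val ∩ p₂.val := by
            rw [e2]; exact Finset.mem_insert_of_mem (Finset.mem_singleton_self dv)
          exact (Finset.mem_inter.1 this).1
    -- build the two edges
    push_neg at hcom
    obtain ⟨p₃, hp₃, hn3⟩ := hcom a b hab
    have hcd3 := CL p₃ hp₃ (fun h => hn3 h.1 h.2)
    have hadjab : G.Adj a b := p₁.2.2 a ha1 b hb1 hab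
    have hadjcd : G.Adj cv dv := p₃.2.2 cv hcd3.1 dv hcd3.2 hcd
    refine ⟨{s(a,b), s(cv,dv)}, ?_, ?_, ?_⟩
    · exact le_trans (Finset.card_insert_le _ _) (by simp)
    · intro e he
      rcases Finset.mem_insert.1 he with rfl | he
      · exact hadjab
      · rw [Finset.mem_singleton.1 he]; exact hadjcd
    · intro p hp
      by_cases hab' : a ∈ p.val ∧ b ∈ p.val
      · refine ⟨s(a,b), Finset.mem_insert_self _ _, fun x hx => ?_⟩
        rw [Sym2.mem_iff] at hx
        rcases hx with rfl | rfl
        exacts [hab'.1, hab'.2]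
      · have := CL p hp hab'
        refine ⟨s(cv,dv), Finset.mem_insert_of_mem (Finset.mem_singleton_self _), fun x hx => ?_⟩
        rw [Sym2.mem_iff] at hx
        rcases hx with rfl | rfl
        exacts [this.1, this.2]

/-- Tuza's conjecture holds for graphs whose triangle graph is perfect:
`τ_Δ(G) ≤ 2 ν_Δ(G)`. -/
theorem tuza_of_perfect_triangleGraph {V : Type*} [Fintype V] [DecidableEq V]
    (G : SimpleGraph V) (hperf : IsPerfect (triangleGraph G)) :
    triTransversalNumber G ≤ 2 * triPackingNumber G := by
  classical
  haveI : Fintype {t : Finset V // IsTriangle G t} := Fintype.ofFinite _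
  set H := triangleGraph G with hH
  obtain ⟨F, hFcard, hFclique, hFcover⟩ := clique_cover H hperf Finset.univ
  -- choose two covering edges for each clique in the cover
  have hch : ∀ Q : Finset {t : Finset V // IsTriangle G t}, ∃ E : Finset (Sym2 V),
      (CliqueF H Q → (E.card ≤ 2 ∧ (∀ e ∈ E, e ∈ G.edgeSet) ∧
        ∀ p ∈ Q, ∃ e ∈ E, ∀ x ∈ e, x ∈ p.val)) := by
    intro Q
    by_cases h : CliqueF H Q
    · obtain ⟨E, hE⟩ := clique_edge_cover G Q h
      exact ⟨E, fun _ => hE⟩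
    · exact ⟨∅, fun hc => absurd hc h⟩
  choose g hg using hch
  set E' : Finset (Sym2 V) := F.biUnion g with hE'
  have hedges : ∀ e ∈ E', e ∈ G.edgeSet := by
    intro e he
    obtain ⟨Q, hQF, heQ⟩ := Finset.mem_biUnion.1 he
    exact (hg Q (hFclique Q hQF)).2.1 e heQ
  have hcover : ∀ t : Finset V, IsTriangle G t → ∃ e ∈ E', ∀ x ∈ e, x ∈ t := by
    intro t ht
    obtain ⟨Q, hQF, hmem⟩ := hFcover ⟨t, ht⟩ (Finset.mem_univ _)
    obtain ⟨e, heQ, hx⟩ := (hg Q (hFclique Q hQF)).2.2 ⟨t, ht⟩ hmem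
    exact ⟨e, Finset.mem_biUnion.2 ⟨Q, hQF, heQ⟩, hx⟩
  have hcard : E'.card ≤ 2 * F.card := by
    calc E'.card ≤ ∑ Q ∈ F, (g Q).card := Finset.card_biUnion_le
    _ ≤ ∑ _Q ∈ F, 2 := Finset.sum_le_sum (fun Q hQF => (hg Q (hFclique Q hQF)).1)
    _ = 2 * F.card := by rw [Finset.sum_const, smul_eq_mul, Nat.mul_comm]
  have htau : triTransversalNumber G ≤ E'.card :=
    Nat.sInf_le ⟨E', rfl, hedges, hcover⟩
  -- the independence number of the triangle graph is at most the packing number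
  have hnu : aN H Finset.univ ≤ triPackingNumber G := by
    obtain ⟨A, _, hAI, hAcard⟩ := exists_max_indep H Finset.univ
    set S : Finset (Finset V) := A.image Subtype.val with hS
    have hScard : S.card = A.card := Finset.card_image_of_injective A Subtype.val_injective
    have hmem : (aN H Finset.univ) ∈ {k : ℕ | ∃ S : Finset (Finset V), S.card = k ∧
        (∀ t ∈ S, IsTriangle G t) ∧ ∀ t ∈ S, ∀ s ∈ S, t ≠ s → (t ∩ s).card ≤ 1} := by
      refine ⟨S, by rw [hScard, hAcard], ?_, ?_⟩
      · intro t htS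
        obtain ⟨p, _, rfl⟩ := Finset.mem_image.1 htS
        exact p.2
      · intro t htS s hsS hts
        obtain ⟨p, hpA, rfl⟩ := Finset.mem_image.1 htS
        obtain ⟨q, hqA, rfl⟩ := Finset.mem_image.1 hsS
        have hpq : p ≠ q := fun h => hts (congrArg Subtype.val h)
        have hnadj := hAI p hpA q hqA hpq
        have h2 : (p.val ∩ q.val).card ≠ 2 := fun h2 => hnadj ⟨hpq, h2⟩
        have h3 : (p.val ∩ q.val).card ≤ 3 :=
          le_trans (Finset.card_le_card (Finset.inter_subset_left)) (le_of_eq p.2.1)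
        rcases Nat.lt_or_ge (p.val ∩ q.val).card 2 with h | h
        · omega
        · exfalso
          have hcc : (p.val ∩ q.val).card = 3 := by omega
          have hsub : p.val ∩ q.val ⊆ p.val := Finset.inter_subset_left
          have h1 : p.val ∩ q.val = p.val :=
            Finset.eq_of_subset_of_card_le hsub (by rw [hcc, p.2.1])
          have hsub2 : p.val ∩ q.val ⊆ q.val := Finset.inter_subset_right
          have h2' : p.val ∩ q.val = q.val :=
            Finset.eq_of_subset_of_card_le hsub2 (by rw [hcc, q.2.1])
          exact hts (by rw [← h1, h2'])
    have hbdd : BddAbove {k : ℕ | ∃ S : Finset (Finset V), S.card = k ∧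
        (∀ t ∈ S, IsTriangle G t) ∧ ∀ t ∈ S, ∀ s ∈ S, t ≠ s → (t ∩ s).card ≤ 1} := by
      refine ⟨Fintype.card (Finset V), ?_⟩
      rintro k ⟨S, rfl, -, -⟩
      exact Finset.card_le_univ S
    exact le_csSup hbdd hmem
  calc triTransversalNumber G ≤ E'.card := htau
  _ ≤ 2 * F.card := hcard
  _ ≤ 2 * aN H Finset.univ := by omega
  _ ≤ 2 * triPackingNumber G := by omega
end
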